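/- arXiv:2301.02644 — 4 statements merged into one kernel-verified Lean document; each statement's English description precedes it below -/
import Mathlib

section
/- Let k be a field and d ≥ 0. Consider the k-algebra homomorphism f_1 : k[a_1,…,a_{d+1}, b_1,…,b_{d+1}] → k[a_1,…,a_d, c′, b_1,…,b_{d+1}] sending b_i ↦ b_i, a_1 ↦ −c′a_1, a_i ↦ a_{i−1} − c′a_i for 1 < i ≤ d, and a_{d+1} ↦ a_d − c′. Then k[a_1,…,a_d, c′, b_1,…,b_{d+1}], regarded as a module over k[a_1,…,a_{d+1}, b_1,…,b_{d+1}] via f_1, is free with basis (1, c′, c′^2, …, c′^d). -/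
open MvPolynomial

/-- Variables of `A_{d+1} = k[a_1,…,a_{d+1}, b_1,…,b_{d+1}]`:
`Sum.inl p` is `a_{p+1}`, `Sum.inr p` is `b_{p+1}`. -/
abbrev AVar (d : ℕ) : Type := Fin (d + 1) ⊕ Fin (d + 1)

/-- Variables of `k[a_1,…,a_d, c', b_1,…,b_{d+1}]`:
`Sum.inl p` is `a_{p+1}`, `Sum.inr (Sum.inl ())` is `c'`, `Sum.inr (Sum.inr p)` is `b_{p+1}`. -/
abbrev RVar (d : ℕ) : Type := Fin d ⊕ (Unit ⊕ Fin (d + 1))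

/-- Variables of `C = k[a_1,…,a_d, c', b_1,…,b_d, c'']`:
`Sum.inl (Sum.inl p)` is `a_{p+1}`, `Sum.inl (Sum.inr ())` is `c'`,
`Sum.inr (Sum.inl p)` is `b_{p+1}`, `Sum.inr (Sum.inr ())` is `c''`. -/
abbrev CVar (d : ℕ) : Type := (Fin d ⊕ Unit) ⊕ (Fin d ⊕ Unit)

/-- Variables of `B_d = k[a_1,…,a_d, b_1,…,b_d, c]`:
`Sum.inl (Sum.inl p)` is `a_{p+1}`, `Sum.inl (Sum.inr p)` is `b_{p+1}`, `Sum.inr ()` is `c`. -/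
abbrev BVar (d : ℕ) : Type := (Fin d ⊕ Fin d) ⊕ Unit

/-- `a_m` in `k[a_1,…,a_d,c',b_1,…,b_{d+1}]` with conventions `a_0 = 0`, `a_{d+1} = 1`. -/
noncomputable def aRm (k : Type) [Field k] (d : ℕ) (m : ℕ) : MvPolynomial (RVar d) k :=
  if h : 1 ≤ m ∧ m ≤ d then X (Sum.inl (⟨m - 1, by omega⟩ : Fin d))
  else if m = d + 1 then 1 else 0

/-- `f_1 : k[a_1,…,a_{d+1},b_1,…,b_{d+1}] → k[a_1,…,a_d,c',b_1,…,b_{d+1}]`,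
`b_i ↦ b_i`, `a_1 ↦ -c'a_1`, `a_i ↦ a_{i-1} - c'a_i` (`1 < i ≤ d`), `a_{d+1} ↦ a_d - c'`. -/
noncomputable def f1 (k : Type) [Field k] (d : ℕ) :
    MvPolynomial (AVar d) k →ₐ[k] MvPolynomial (RVar d) k :=
  aeval (fun v => match v with
    | Sum.inl p => aRm k d p - X (Sum.inr (Sum.inl ())) * aRm k d ((p : ℕ) + 1)
    | Sum.inr q => X (Sum.inr (Sum.inr q)))

namespace Stmt5

variable (k : Type) [Field k] (d : ℕ)

/-- `c'` -/
noncomputable def cR : MvPolynomial (RVar d) k := X (Sum.inr (Sum.inl ()))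

/-- `a_m` in the source ring, `1 ≤ m ≤ d+1`. -/
noncomputable def aA (m : ℕ) : MvPolynomial (AVar d) k :=
  if h : 1 ≤ m ∧ m ≤ d + 1 then X (Sum.inl (⟨m - 1, by omega⟩ : Fin (d + 1))) else 0

lemma aRm_zero : aRm k d 0 = 0 := by simp [aRm]
lemma aRm_top : aRm k d (d + 1) = 1 := by simp [aRm]

lemma f1_aA (m : ℕ) (h1 : 1 ≤ m) (h2 : m ≤ d + 1) :
    f1 k d (aA k d m) = aRm k d (m - 1) - cR k d * aRm k d m := by
  rw [aA, dif_pos ⟨h1, h2⟩]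
  show aeval _ (X _) = _
  rw [aeval_X]
  have : m - 1 + 1 = m := by omega
  simp only [this, cR]

/-- The monic polynomial `g(T) = T^{d+1} + ∑_{j=0}^{d} a_{j+1} T^j`. -/
noncomputable def g : Polynomial (MvPolynomial (AVar d) k) :=
  Polynomial.X ^ (d + 1) +
    ∑ j ∈ Finset.range (d + 1), Polynomial.C (aA k d (j + 1)) * Polynomial.X ^ j

lemma degree_tail :
    (∑ j ∈ Finset.range (d + 1),
      Polynomial.C (aA k d (j + 1)) * Polynomial.X ^ j).degree < ((d + 1 : ℕ) : WithBot ℕ) := by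
  refine lt_of_le_of_lt (Polynomial.degree_sum_le _ _) ?_
  rw [Finset.sup_lt_iff (by exact_mod_cast WithBot.bot_lt_coe (d + 1))]
  intro j hj
  refine lt_of_le_of_lt (Polynomial.degree_C_mul_X_pow_le _ _) ?_
  exact_mod_cast Finset.mem_range.mp hj

lemma monic_g : (g k d).Monic :=
  Polynomial.monic_X_pow_add (degree_tail k d)

lemma natDegree_g : (g k d).natDegree = d + 1 := by
  have : (g k d).degree = (d + 1 : ℕ) := by
    rw [g, Polynomial.degree_add_eq_left_of_degree_lt, Polynomial.degree_X_pow]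
    rw [Polynomial.degree_X_pow]; exact degree_tail k d
  exact Polynomial.natDegree_eq_of_degree_eq_some this

lemma hroot : Polynomial.eval₂ (f1 k d).toRingHom (cR k d) (g k d) = 0 := by
  rw [g, Polynomial.eval₂_add, Polynomial.eval₂_X_pow, Polynomial.eval₂_finset_sum]
  have : ∀ j ∈ Finset.range (d + 1),
      Polynomial.eval₂ (f1 k d).toRingHom (cR k d)
        (Polynomial.C (aA k d (j + 1)) * Polynomial.X ^ j) =
      aRm k d j * cR k d ^ j - aRm k d (j + 1) * cR k d ^ (j + 1) := by
    intro j hj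
    have hj' := Finset.mem_range.mp hj
    rw [Polynomial.eval₂_mul, Polynomial.eval₂_C, Polynomial.eval₂_X_pow]
    have := f1_aA k d (j + 1) (by omega) (by omega : j + 1 ≤ d + 1)
    simp only [Nat.add_sub_cancel] at this
    rw [show ((f1 k d).toRingHom (aA k d (j+1)) : MvPolynomial (RVar d) k)
        = f1 k d (aA k d (j+1)) from rfl, this]
    ring
  rw [Finset.sum_congr rfl this, Finset.sum_range_sub' (fun i => aRm k d i * cR k d ^ i)]
  rw [aRm_zero, aRm_top]
  ring

/-- `AdjoinRoot (g k d)` abbreviation. -/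
noncomputable abbrev AR := AdjoinRoot (g k d)

noncomputable def E (i : ℕ) : AR k d :=
  (∑ j ∈ Finset.range (d + 1 - i),
    AdjoinRoot.root (g k d) ^ j * AdjoinRoot.of (g k d) (aA k d (i + j + 1))) +
  AdjoinRoot.root (g k d) ^ (d + 1 - i)

lemma E_zero : E k d 0 = 0 := by
  have h := AdjoinRoot.eval₂_root (g k d)
  rw [g, Polynomial.eval₂_add, Polynomial.eval₂_X_pow, Polynomial.eval₂_finset_sum] at h
  simp only [Polynomial.eval₂_mul, Polynomial.eval₂_C, Polynomial.eval₂_X_pow] at h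
  rw [E]
  simp only [Nat.sub_zero, Nat.zero_add]
  calc (∑ j ∈ Finset.range (d + 1),
        AdjoinRoot.root (g k d) ^ j * AdjoinRoot.of (g k d) (aA k d (j + 1))) +
        AdjoinRoot.root (g k d) ^ (d + 1)
      = AdjoinRoot.root (g k d) ^ (d + 1) +
        ∑ j ∈ Finset.range (d + 1),
          AdjoinRoot.of (g k d) (aA k d (j + 1)) * AdjoinRoot.root (g k d) ^ j := by
        rw [add_comm]; congr 1; exact Finset.sum_congr rfl fun j _ => mul_comm _ _
    _ = 0 := h

lemma E_top : E k d (d + 1) = 1 := by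
  simp [E]

lemma E_rec (i : ℕ) (hi : i ≤ d) :
    E k d i = AdjoinRoot.of (g k d) (aA k d (i + 1)) + AdjoinRoot.root (g k d) * E k d (i + 1) := by
  have h1 : d + 1 - i = (d - i) + 1 := by omega
  have h2 : d + 1 - (i + 1) = d - i := by omega
  rw [E, E, h1, h2, Finset.sum_range_succ']
  rw [mul_add, Finset.mul_sum]
  simp only [pow_zero, one_mul]
  have : ∀ j, AdjoinRoot.root (g k d) *
      (AdjoinRoot.root (g k d) ^ j * AdjoinRoot.of (g k d) (aA k d (i + 1 + j + 1)))
      = AdjoinRoot.root (g k d) ^ (j + 1) * AdjoinRoot.of (g k d) (aA k d (i + (j + 1) + 1)) := by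
    intro j
    rw [show i + 1 + j + 1 = i + (j + 1) + 1 by omega, pow_succ]
    ring
  simp only [this, Nat.add_zero]
  rw [← pow_succ', show d - i + 1 = 1 + (d - i) by omega]
  ring

/-- `ψ : k[a,c',b] → AdjoinRoot g`. -/
noncomputable def psi : MvPolynomial (RVar d) k →ₐ[k] AR k d :=
  aeval (fun v => match v with
    | Sum.inl p => E k d ((p : ℕ) + 1)
    | Sum.inr (Sum.inl _) => AdjoinRoot.root (g k d)
    | Sum.inr (Sum.inr q) => AdjoinRoot.of (g k d) (X (Sum.inr q)))

lemma psi_cR : psi k d (cR k d) = AdjoinRoot.root (g k d) := by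
  rw [cR, psi, aeval_X]

lemma psi_aRm (m : ℕ) (hm : m ≤ d + 1) : psi k d (aRm k d m) = E k d m := by
  rcases Nat.eq_or_lt_of_le hm with h | h
  · rw [h, aRm_top, E_top, map_one]
  rcases Nat.eq_zero_or_pos m with h0 | h0
  · rw [h0, aRm_zero, E_zero, map_zero]
  have hmd : m ≤ d := by omega
  rw [aRm, dif_pos ⟨h0, hmd⟩, psi, aeval_X]
  show E k d ((m - 1) + 1) = E k d m
  congr 1; omega

/-- `φ' : AdjoinRoot g → k[a,c',b]`. -/
noncomputable def phi : AR k d →+* MvPolynomial (RVar d) k :=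
  AdjoinRoot.lift (f1 k d).toRingHom (cR k d) (hroot k d)

lemma phi_E (i : ℕ) (hi : i ≤ d + 1) : phi k d (E k d i) = aRm k d i := by
  rw [E, phi, map_add, map_sum, map_pow, AdjoinRoot.lift_root]
  have : ∀ j ∈ Finset.range (d + 1 - i),
      AdjoinRoot.lift (f1 k d).toRingHom (cR k d) (hroot k d)
        (AdjoinRoot.root (g k d) ^ j * AdjoinRoot.of (g k d) (aA k d (i + j + 1)))
      = aRm k d (i + j) * cR k d ^ j - aRm k d (i + (j + 1)) * cR k d ^ (j + 1) := by
    intro j hj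
    rw [map_mul, map_pow, AdjoinRoot.lift_root, AdjoinRoot.lift_of]
    have := f1_aA k d (i + j + 1) (by omega) (by have := Finset.mem_range.mp hj; omega)
    simp only [Nat.add_sub_cancel] at this
    rw [show ((f1 k d).toRingHom (aA k d (i+j+1)) : MvPolynomial (RVar d) k)
        = f1 k d (aA k d (i+j+1)) from rfl, this,
      show i + (j + 1) = i + j + 1 by omega]
    ring
  rw [Finset.sum_congr rfl this,
    Finset.sum_range_sub' (fun j => aRm k d (i + j) * cR k d ^ j)]
  rw [show i + (d + 1 - i) = d + 1 by omega, aRm_top]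
  simp

lemma psi_f1 (a : MvPolynomial (AVar d) k) : psi k d (f1 k d a) = AdjoinRoot.of (g k d) a := by
  have h : (psi k d).comp (f1 k d) = IsScalarTower.toAlgHom k (MvPolynomial (AVar d) k) (AR k d) := by
    apply MvPolynomial.algHom_ext
    intro v
    match v with
    | Sum.inl p =>
      show psi k d (f1 k d (X (Sum.inl p))) = AdjoinRoot.of (g k d) (X (Sum.inl p))
      rw [f1, aeval_X]
      show psi k d (aRm k d p - cR k d * aRm k d ((p : ℕ) + 1)) = _
      rw [map_sub, map_mul, psi_cR, psi_aRm k d p (by omega), psi_aRm k d (p + 1) (by omega)]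
      have := E_rec k d p p.is_le
      have haa : aA k d ((p : ℕ) + 1) = X (Sum.inl p) := by
        rw [aA, dif_pos ⟨by omega, by omega⟩]
        congr 1
      rw [this, haa]
      ring
    | Sum.inr q =>
      show psi k d (f1 k d (X (Sum.inr q))) = AdjoinRoot.of (g k d) (X (Sum.inr q))
      rw [f1, aeval_X]
      show psi k d (X (Sum.inr (Sum.inr q))) = _
      rw [psi, aeval_X]
  exact congrFun (congrArg (fun f => f.toFun) h) a

lemma phi_psi (s : MvPolynomial (RVar d) k) : phi k d (psi k d s) = s := by
  have h : (phi k d).comp (psi k d).toRingHom = RingHom.id _ := by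
    apply MvPolynomial.ringHom_ext
    · intro r
      show phi k d (psi k d (C r)) = C r
      have : (C r : MvPolynomial (RVar d) k) = algebraMap k _ r := rfl
      rw [this, (psi k d).commutes]
      show phi k d (AdjoinRoot.of (g k d) (algebraMap k _ r)) = _
      rw [phi, AdjoinRoot.lift_of]
      exact (f1 k d).commutes r
    · intro v
      match v with
      | Sum.inl p =>
        show phi k d (psi k d (X (Sum.inl p))) = X (Sum.inl p)
        rw [psi, aeval_X]
        show phi k d (E k d ((p : ℕ) + 1)) = _
        rw [phi_E k d _ (by omega)]
        rw [aRm, dif_pos ⟨by omega, by omega⟩]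
        congr 1
      | Sum.inr (Sum.inl u) =>
        show phi k d (psi k d (X (Sum.inr (Sum.inl u)))) = X (Sum.inr (Sum.inl u))
        rw [psi, aeval_X]
        show phi k d (AdjoinRoot.root (g k d)) = _
        rw [phi, AdjoinRoot.lift_root, cR]
      | Sum.inr (Sum.inr q) =>
        show phi k d (psi k d (X (Sum.inr (Sum.inr q)))) = X (Sum.inr (Sum.inr q))
        rw [psi, aeval_X]
        show phi k d (AdjoinRoot.of (g k d) (X (Sum.inr q))) = _
        rw [phi, AdjoinRoot.lift_of]
        show f1 k d (X (Sum.inr q)) = _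
        rw [f1, aeval_X]
  exact congrFun (congrArg (fun f => f.toFun) h) s

lemma psi_phi (x : AR k d) : psi k d (phi k d x) = x := by
  obtain ⟨p, rfl⟩ := AdjoinRoot.mk_surjective x
  rw [phi, AdjoinRoot.lift_mk]
  have h : (psi k d).toRingHom.comp (Polynomial.eval₂RingHom (f1 k d).toRingHom (cR k d))
      = AdjoinRoot.mk (g k d) := by
    apply Polynomial.ringHom_ext
    · intro a
      show psi k d (Polynomial.eval₂ (f1 k d).toRingHom (cR k d) (Polynomial.C a))
        = AdjoinRoot.mk (g k d) (Polynomial.C a)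
      rw [Polynomial.eval₂_C]
      exact psi_f1 k d a
    · show psi k d (Polynomial.eval₂ (f1 k d).toRingHom (cR k d) Polynomial.X)
        = AdjoinRoot.mk (g k d) Polynomial.X
      rw [Polynomial.eval₂_X, psi_cR, AdjoinRoot.mk_X]
  exact congrFun (congrArg (fun f => f.toFun) h) p

lemma phi_bijective : Function.Bijective (phi k d) :=
  Function.bijective_iff_has_inverse.mpr
    ⟨psi k d, psi_phi k d, phi_psi k d⟩

end Stmt5

/-- `k[a_1,…,a_d,c',b_1,…,b_{d+1}]` is free as a module over
`k[a_1,…,a_{d+1},b_1,…,b_{d+1}]` (acting through `f_1`) with basis `1, c', …, c'^d`: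
the map `(r_0,…,r_d) ↦ ∑ f_1(r_i)·c'^i` is bijective. -/

theorem statement5 (k : Type) [Field k] (d : ℕ) :
    Function.Bijective (fun r : Fin (d + 1) → MvPolynomial (AVar d) k =>
      ∑ i : Fin (d + 1), f1 k d (r i) * X (Sum.inr (Sum.inl ())) ^ (i : ℕ)) := by
  classical
  set b : Module.Basis (Fin (d + 1)) (MvPolynomial (AVar d) k) (Stmt5.AR k d) :=
    (AdjoinRoot.powerBasisAux' (Stmt5.monic_g k d)).reindex
      (finCongr (Stmt5.natDegree_g k d)) with hb
  have hbi : ∀ i : Fin (d + 1), b i = AdjoinRoot.root (Stmt5.g k d) ^ (i : ℕ) := by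
    intro i
    rw [hb, Module.Basis.reindex_apply]
    have := (AdjoinRoot.powerBasis' (Stmt5.monic_g k d)).basis_eq_pow
      ((finCongr (Stmt5.natDegree_g k d)).symm i)
    exact this
  have key : (fun r : Fin (d + 1) → MvPolynomial (AVar d) k =>
      ∑ i : Fin (d + 1), f1 k d (r i) * X (Sum.inr (Sum.inl ())) ^ (i : ℕ))
      = (Stmt5.phi k d) ∘ (b.equivFun.symm) := by
    funext r
    show _ = Stmt5.phi k d (b.equivFun.symm r)
    rw [Module.Basis.equivFun_symm_apply, map_sum]
    refine Finset.sum_congr rfl fun i _ => ?_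
    rw [hbi i, Algebra.smul_def, AdjoinRoot.algebraMap_eq, map_mul, map_pow]
    rw [Stmt5.phi, AdjoinRoot.lift_of, AdjoinRoot.lift_root]
    rfl
  rw [key]
  exact (Stmt5.phi_bijective k d).comp b.equivFun.symm.bijective
end

section
/- Let k be a field and d ≥ 0. Let C = k[a_1,…,a_d, c′, b_1,…,b_d, c″], regarded as a module over A_{d+1} = k[a_1,…,a_{d+1}, b_1,…,b_{d+1}] via the composite f_3 ∘ f_2 ∘ f_1, where f_1 sends b_i ↦ b_i, a_1 ↦ −c′a_1, a_i ↦ a_{i−1} − c′a_i (1 < i ≤ d), a_{d+1} ↦ a_d − c′; f_2 fixes all variables except b_{d+1} ↦ b_{d+1} + c′; and f_3 sends a_i ↦ a_i, c′ ↦ c′, b_1 ↦ −c″b_1, b_i ↦ b_{i−1} − c″b_i (1 < i ≤ d), b_{d+1} ↦ b_d − c″. Then C is a free A_{d+1}-module with basis {c′^i c″^j : 0 ≤ i, j ≤ d}. -/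
open MvPolynomial

/-- `f_2`: the automorphism of `k[a_1,…,a_d,c',b_1,…,b_{d+1}]` fixing `a_i`, `c'` and
`b_i` for `i ≤ d`, and sending `b_{d+1} ↦ b_{d+1} + c'`. -/
noncomputable def f2 (k : Type) [Field k] (d : ℕ) :
    MvPolynomial (RVar d) k →ₐ[k] MvPolynomial (RVar d) k :=
  aeval (fun v => match v with
    | Sum.inr (Sum.inr q) =>
        if (q : ℕ) = d then X (Sum.inr (Sum.inr q)) + X (Sum.inr (Sum.inl ()))
        else X (Sum.inr (Sum.inr q))
    | v => X v)

/-- `b_m` in `C = k[a_1,…,a_d,c',b_1,…,b_d,c'']` with conventions `b_0 = 0`, `b_{d+1} = 1`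
(the latter so that `b_m - c''·b_{m+1}` gives `b_d - c''` for `m = d`). -/
noncomputable def bCm (k : Type) [Field k] (d : ℕ) (m : ℕ) : MvPolynomial (CVar d) k :=
  if h : 1 ≤ m ∧ m ≤ d then X (Sum.inr (Sum.inl (⟨m - 1, by omega⟩ : Fin d)))
  else if m = d + 1 then 1 else 0

/-- `f_3 : k[a_1,…,a_d,c',b_1,…,b_{d+1}] → C`, `a_i ↦ a_i`, `c' ↦ c'`,
`b_1 ↦ -c''b_1`, `b_i ↦ b_{i-1} - c''b_i` (`1 < i ≤ d`), `b_{d+1} ↦ b_d - c''`. -/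
noncomputable def f3 (k : Type) [Field k] (d : ℕ) :
    MvPolynomial (RVar d) k →ₐ[k] MvPolynomial (CVar d) k :=
  aeval (fun v => match v with
    | Sum.inl p => X (Sum.inl (Sum.inl p))
    | Sum.inr (Sum.inl ()) => X (Sum.inl (Sum.inr ()))
    | Sum.inr (Sum.inr q) => bCm k d q - X (Sum.inr (Sum.inr ())) * bCm k d ((q : ℕ) + 1))


open Polynomial in
theorem FC {R : Type*} [CommRing R] {d : ℕ} {M : R[X]} (hM : M.Monic)
    (hdeg : M.natDegree = d + 1) :
    Function.Bijective (fun r : Fin (d + 1) → R[X] => ∑ i, (r i).comp M * Polynomial.X ^ (i : ℕ)) := by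
  classical
  rcases subsingleton_or_nontrivial R with hR | hR
  · constructor
    · intro a b _; exact Subsingleton.elim a b
    · intro f; exact ⟨0, Subsingleton.elim _ _⟩
  have hM0 : M.natDegree ≠ 0 := by omega
  have hMdeg : M.degree = ((d + 1 : ℕ) : WithBot ℕ) := by
    rw [degree_eq_natDegree hM.ne_zero, hdeg]
  constructor
  · -- injective
    have key : ∀ r : Fin (d + 1) → R[X], (∑ i, (r i).comp M * Polynomial.X ^ (i : ℕ)) = 0 → r = 0 := by
      intro r hr
      by_contra hne
      have hSne : (Finset.univ.filter fun i => r i ≠ 0).Nonempty := by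
        rcases Function.ne_iff.mp hne with ⟨i, hi⟩
        exact ⟨i, Finset.mem_filter.mpr ⟨Finset.mem_univ i, by simpa using hi⟩⟩
      obtain ⟨i₀, hi₀S, hmax⟩ := Finset.exists_max_image _
        (fun i : Fin (d + 1) => (r i).natDegree * (d + 1) + (i : ℕ)) hSne
      have hr0 : r i₀ ≠ 0 := by simpa using (Finset.mem_filter.mp hi₀S).2
      set N := (r i₀).natDegree * (d + 1) + (i₀ : ℕ) with hN
      have hcoeff : (∑ i, (r i).comp M * Polynomial.X ^ (i : ℕ)).coeff N = (r i₀).leadingCoeff := by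
        rw [finset_sum_coeff, Finset.sum_eq_single i₀]
        · rw [coeff_mul_X_pow', if_pos (by omega : (i₀ : ℕ) ≤ N)]
          have h4 : N - (i₀ : ℕ) = (r i₀).natDegree * M.natDegree := by rw [hdeg]; omega
          rw [h4, coeff_comp_degree_mul_degree hM0, hM.leadingCoeff, one_pow, mul_one]
        · intro i _ hii
          by_cases h0 : r i = 0
          · simp [h0]
          · apply coeff_eq_zero_of_natDegree_lt
            have h1 : ((r i).comp M * Polynomial.X ^ (i : ℕ)).natDegree ≤
                (r i).natDegree * (d + 1) + (i : ℕ) := by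
              refine le_trans natDegree_mul_le ?_
              have h5 := natDegree_comp_le (p := r i) (q := M)
              rw [hdeg] at h5
              rw [natDegree_X_pow]
              omega
            have h2 : (r i).natDegree * (d + 1) + (i : ℕ) ≤ N :=
              hmax i (Finset.mem_filter.mpr ⟨Finset.mem_univ i, h0⟩)
            have h3 : (r i).natDegree * (d + 1) + (i : ℕ) ≠ N := by
              intro hEq
              apply hii
              apply Fin.ext
              have e1 : ((r i).natDegree * (d + 1) + (i : ℕ)) % (d + 1) = (i : ℕ) := by
                rw [mul_comm, Nat.mul_add_mod, Nat.mod_eq_of_lt i.isLt]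
              have e2 : ((r i₀).natDegree * (d + 1) + (i₀ : ℕ)) % (d + 1) = (i₀ : ℕ) := by
                rw [mul_comm, Nat.mul_add_mod, Nat.mod_eq_of_lt i₀.isLt]
              rw [← e1, ← e2, hEq]
            omega
        · intro h; exact absurd (Finset.mem_univ i₀) h
      rw [hr, Polynomial.coeff_zero] at hcoeff
      exact hr0 (leadingCoeff_eq_zero.mp hcoeff.symm)
    intro a b hab
    dsimp only at hab
    have hs : a - b = 0 := by
      apply key
      have h6 : ∑ i, ((a - b) i).comp M * Polynomial.X ^ (i : ℕ) =
          (∑ i, (a i).comp M * Polynomial.X ^ (i : ℕ)) - ∑ i, (b i).comp M * Polynomial.X ^ (i : ℕ) := by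
        rw [← Finset.sum_sub_distrib]
        refine Finset.sum_congr rfl fun i _ => ?_
        simp [Pi.sub_apply, sub_comp, sub_mul]
      rw [h6, hab, sub_self]
    rw [sub_eq_zero] at hs
    exact hs
  · -- surjective
    have main : ∀ n (f : R[X]), f.natDegree ≤ n →
        ∃ r : Fin (d + 1) → R[X], (∑ i, (r i).comp M * Polynomial.X ^ (i : ℕ)) = f := by
      intro n
      induction n using Nat.strong_induction_on with
      | _ n ih =>
        intro f hf
        by_cases hsmall : f.natDegree < d + 1
        · refine ⟨fun i => Polynomial.C (f.coeff i), ?_⟩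
          have h7 : ∀ i : Fin (d + 1), (Polynomial.C (f.coeff (i : ℕ))).comp M * Polynomial.X ^ (i : ℕ) =
              Polynomial.monomial (i : ℕ) (f.coeff (i : ℕ)) := by
            intro i; rw [Polynomial.C_comp, Polynomial.C_mul_X_pow_eq_monomial]
          rw [Finset.sum_congr rfl fun i _ => h7 i]
          rw [Fin.sum_univ_eq_sum_range fun i => Polynomial.monomial i (f.coeff i)]
          exact (f.as_sum_range' (d + 1) hsmall).symm
        · push_neg at hsmall
          have hf0 : f ≠ 0 := by
            intro h; rw [h, natDegree_zero] at hsmall; omega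
          have hq : (f /ₘ M).natDegree < n := by
            have h8 := natDegree_divByMonic f hM
            omega
          obtain ⟨s, hs⟩ := ih _ hq (f /ₘ M) le_rfl
          have hmod : (f %ₘ M).natDegree < d + 1 := by
            by_cases h : f %ₘ M = 0
            · simp [h]
            · have h9 := degree_modByMonic_lt f hM
              rw [hMdeg] at h9
              exact (natDegree_lt_iff_degree_lt h).mpr h9
          refine ⟨fun i => Polynomial.C ((f %ₘ M).coeff i) + Polynomial.X * s i, ?_⟩
          have expand : ∀ i : Fin (d + 1),
              (Polynomial.C ((f %ₘ M).coeff (i : ℕ)) + Polynomial.X * s i).comp M * Polynomial.X ^ (i : ℕ)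
              = Polynomial.monomial (i : ℕ) ((f %ₘ M).coeff (i : ℕ)) + M * ((s i).comp M * Polynomial.X ^ (i : ℕ)) := by
            intro i
            rw [Polynomial.add_comp, Polynomial.C_comp, Polynomial.mul_comp, Polynomial.X_comp, add_mul, Polynomial.C_mul_X_pow_eq_monomial, mul_assoc]
          rw [Finset.sum_congr rfl fun i _ => expand i, Finset.sum_add_distrib, ← Finset.mul_sum,
            hs]
          rw [Fin.sum_univ_eq_sum_range fun i => Polynomial.monomial i ((f %ₘ M).coeff i)]
          rw [← as_sum_range' _ (d + 1) hmod]
          exact modByMonic_add_div f M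
    intro f
    exact main f.natDegree f le_rfl

open Polynomial in
theorem FCneg{R : Type*} [CommRing R] {d : ℕ} {q : R[X]} (hq : (-q).Monic)
    (hdeg : (-q).natDegree = d + 1) :
    Function.Bijective (fun r : Fin (d + 1) → R[X] => ∑ i, (r i).comp q * Polynomial.X ^ (i : ℕ)) := by
  have hinv : Function.Involutive (fun r : Fin (d + 1) → R[X] => fun i => (r i).comp (-Polynomial.X)) := by
    intro r
    funext i
    show ((r i).comp (-Polynomial.X)).comp (-Polynomial.X) = r i
    rw [comp_assoc, neg_comp, X_comp, neg_neg, comp_X]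
  have heq : (fun r : Fin (d + 1) → R[X] => ∑ i, (r i).comp q * Polynomial.X ^ (i : ℕ)) =
      (fun r : Fin (d + 1) → R[X] => ∑ i, (r i).comp (-q) * Polynomial.X ^ (i : ℕ)) ∘
      (fun r : Fin (d + 1) → R[X] => fun i => (r i).comp (-Polynomial.X)) := by
    funext r
    refine Finset.sum_congr rfl fun i _ => ?_
    show (r i).comp q * _ = ((r i).comp (-Polynomial.X)).comp (-q) * _
    rw [comp_assoc, neg_comp, X_comp, neg_neg]
  rw [heq]
  exact (FC hq hdeg).comp hinv.bijective

namespace S7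

variable (k : Type) [Field k] (d : ℕ) (J : Type)

noncomputable def yJ (m : ℕ) : MvPolynomial ((Fin d ⊕ Unit) ⊕ J) k :=
  if h : 1 ≤ m ∧ m ≤ d then X (Sum.inl (Sum.inl ⟨m - 1, by omega⟩))
  else if m = d + 1 then 1 else 0

noncomputable def tJ : MvPolynomial ((Fin d ⊕ Unit) ⊕ J) k := X (Sum.inl (Sum.inr ()))

noncomputable def gJ : MvPolynomial (Fin (d + 1) ⊕ J) k →ₐ[k]
    MvPolynomial ((Fin d ⊕ Unit) ⊕ J) k :=
  aeval (fun v => match v with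
    | Sum.inl p => yJ k d J p - tJ k d J * yJ k d J ((p : ℕ) + 1)
    | Sum.inr j => X (Sum.inr j))

noncomputable def g0J : MvPolynomial (Fin (d + 1) ⊕ J) k →ₐ[k]
    MvPolynomial ((Fin d ⊕ Unit) ⊕ J) k :=
  aeval (fun v => match v with
    | Sum.inl p => if (p : ℕ) = 0 then
        -(∑ m ∈ Finset.range (d + 1), tJ k d J ^ (m + 1) * yJ k d J (m + 1))
        else yJ k d J (p : ℕ)
    | Sum.inr j => X (Sum.inr j))

noncomputable def sig : MvPolynomial ((Fin d ⊕ Unit) ⊕ J) k →ₐ[k]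
    MvPolynomial ((Fin d ⊕ Unit) ⊕ J) k :=
  aeval (fun v => match v with
    | Sum.inl (Sum.inl q) => X (Sum.inl (Sum.inl q)) - tJ k d J * yJ k d J ((q : ℕ) + 2)
    | Sum.inl (Sum.inr _) => tJ k d J
    | Sum.inr j => X (Sum.inr j))

noncomputable def sig' : MvPolynomial ((Fin d ⊕ Unit) ⊕ J) k →ₐ[k]
    MvPolynomial ((Fin d ⊕ Unit) ⊕ J) k :=
  aeval (fun v => match v with
    | Sum.inl (Sum.inl q) =>
        ∑ j ∈ Finset.range (d + 1 - (q : ℕ)), tJ k d J ^ j * yJ k d J ((q : ℕ) + 1 + j)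
    | Sum.inl (Sum.inr _) => tJ k d J
    | Sum.inr j => X (Sum.inr j))

lemma yJ_eq_X {m : ℕ} (h1 : 1 ≤ m) (h2 : m ≤ d) :
    yJ k d J m = X (Sum.inl (Sum.inl ⟨m - 1, by omega⟩)) := by
  rw [yJ, dif_pos ⟨h1, h2⟩]

lemma yJ_top : yJ k d J (d + 1) = 1 := by
  rw [yJ, dif_neg (by omega), if_pos rfl]

lemma yJ_big {m : ℕ} (h : d + 1 < m) : yJ k d J m = 0 := by
  rw [yJ, dif_neg (by omega), if_neg (by omega)]

lemma yJ_zero : yJ k d J 0 = 0 := by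
  rw [yJ, dif_neg (by omega), if_neg (by omega)]

lemma sig_tJ : sig k d J (tJ k d J) = tJ k d J := by rw [sig, tJ, aeval_X]

lemma sig'_tJ : sig' k d J (tJ k d J) = tJ k d J := by rw [sig', tJ, aeval_X]

lemma sig_yJ (m : ℕ) (hm : 1 ≤ m) :
    sig k d J (yJ k d J m) = yJ k d J m - tJ k d J * yJ k d J (m + 1) := by
  rcases le_or_gt m d with h | h
  · rw [yJ_eq_X k d J hm h, sig, aeval_X]
    show X _ - tJ k d J * yJ k d J ((m - 1) + 2) = _
    rw [show (m - 1) + 2 = m + 1 from by omega, ← yJ_eq_X k d J hm h]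
  · rcases eq_or_lt_of_le (show d + 1 ≤ m from h) with h' | h'
    · rw [← h', yJ_top, map_one, yJ_big k d J (by omega), mul_zero, sub_zero]
    · rw [yJ_big k d J h', map_zero, yJ_big k d J (by omega), mul_zero, sub_zero]

lemma sig'_yJ (m : ℕ) (hm : 1 ≤ m) :
    sig' k d J (yJ k d J m) =
      ∑ j ∈ Finset.range (d + 2 - m), tJ k d J ^ j * yJ k d J (m + j) := by
  rcases le_or_gt m d with h | h
  · rw [yJ_eq_X k d J hm h, sig', aeval_X]
    show ∑ j ∈ Finset.range (d + 1 - (m - 1)), tJ k d J ^ j * yJ k d J ((m - 1) + 1 + j) = _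
    rw [show d + 1 - (m - 1) = d + 2 - m from by omega]
    exact Finset.sum_congr rfl fun j _ => by rw [show (m - 1) + 1 + j = m + j from by omega]
  · rcases eq_or_lt_of_le (show d + 1 ≤ m from h) with h' | h'
    · rw [← h', yJ_top, map_one, show d + 2 - (d + 1) = 1 from by omega,
        Finset.sum_range_one, pow_zero, one_mul, add_zero, yJ_top]
    · rw [yJ_big k d J h', map_zero, show d + 2 - m = 0 from by omega,
        Finset.range_zero, Finset.sum_empty]

lemma sig'_sig : (sig' k d J).comp (sig k d J) = AlgHom.id k _ := by
  apply MvPolynomial.algHom_ext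
  rintro ((q | u) | j)
  · simp only [AlgHom.comp_apply, AlgHom.id_apply]
    rw [sig, aeval_X]
    show sig' k d J (X (Sum.inl (Sum.inl q)) - tJ k d J * yJ k d J ((q : ℕ) + 2)) = _
    rw [map_sub, map_mul, sig'_tJ]
    rw [show (X (Sum.inl (Sum.inl q)) : MvPolynomial ((Fin d ⊕ Unit) ⊕ J) k)
      = yJ k d J ((q : ℕ) + 1) from (by rw [yJ_eq_X k d J (by omega) (by omega)]; simp)]
    rw [sig'_yJ k d J _ (by omega), sig'_yJ k d J _ (by omega)]
    rw [show d + 2 - ((q : ℕ) + 1) = (d - (q : ℕ)) + 1 from by omega, Finset.sum_range_succ']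
    rw [Finset.mul_sum]
    rw [show ∑ j ∈ Finset.range (d + 2 - ((q : ℕ) + 2)),
          tJ k d J * (tJ k d J ^ j * yJ k d J ((q : ℕ) + 2 + j))
        = ∑ j ∈ Finset.range (d - (q : ℕ)),
          tJ k d J ^ (j + 1) * yJ k d J ((q : ℕ) + 1 + (j + 1)) from by
      rw [show d + 2 - ((q : ℕ) + 2) = d - (q : ℕ) from by omega]
      refine Finset.sum_congr rfl fun j _ => ?_
      rw [show (q : ℕ) + 1 + (j + 1) = (q : ℕ) + 2 + j from by omega, pow_succ', mul_assoc]]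
    rw [add_sub_cancel_left, pow_zero, one_mul, add_zero]
  · simp [sig, sig', tJ, aeval_X]
  · simp [sig, sig', aeval_X]

end S7

namespace S7
variable (k : Type) [Field k] (d : ℕ) (J : Type)

lemma sig_sig' : (sig k d J).comp (sig' k d J) = AlgHom.id k _ := by
  apply MvPolynomial.algHom_ext
  rintro ((q | u) | j)
  · simp only [AlgHom.comp_apply, AlgHom.id_apply]
    rw [sig', aeval_X]
    show sig k d J (∑ j ∈ Finset.range (d + 1 - (q : ℕ)),
      tJ k d J ^ j * yJ k d J ((q : ℕ) + 1 + j)) = _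
    rw [map_sum]
    have hterm : ∀ j, sig k d J (tJ k d J ^ j * yJ k d J ((q : ℕ) + 1 + j)) =
        tJ k d J ^ j * yJ k d J ((q : ℕ) + 1 + j)
          - tJ k d J ^ (j + 1) * yJ k d J ((q : ℕ) + 1 + (j + 1)) := by
      intro j
      rw [map_mul, map_pow, sig_tJ, sig_yJ k d J _ (by omega), mul_sub]
      rw [show (q : ℕ) + 1 + (j + 1) = (q : ℕ) + 1 + j + 1 from by omega, pow_succ']
      ring
    rw [Finset.sum_congr rfl fun j _ => hterm j, Finset.sum_range_sub']
    have h1 : (q : ℕ) + 1 + (d + 1 - (q : ℕ)) = d + 2 := by have := q.isLt; omega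
    rw [h1, yJ_big k d J (m := d + 2) (by omega), mul_zero, sub_zero, pow_zero, one_mul,
      add_zero, yJ_eq_X k d J (by omega) (by have := q.isLt; omega)]
    simp
  · simp [sig, sig', tJ, aeval_X]
  · simp [sig, sig', aeval_X]

noncomputable def sigE : MvPolynomial ((Fin d ⊕ Unit) ⊕ J) k ≃ₐ[k]
    MvPolynomial ((Fin d ⊕ Unit) ⊕ J) k :=
  AlgEquiv.ofAlgHom (sig k d J) (sig' k d J) (sig_sig' k d J) (sig'_sig k d J)

lemma gJ_eq : gJ k d J = (sig k d J).comp (g0J k d J) := by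
  apply MvPolynomial.algHom_ext
  rintro (p | j)
  · simp only [AlgHom.comp_apply]
    rw [gJ, aeval_X, g0J, aeval_X]
    show yJ k d J (p : ℕ) - tJ k d J * yJ k d J ((p : ℕ) + 1) =
      sig k d J (if (p : ℕ) = 0 then
        -(∑ m ∈ Finset.range (d + 1), tJ k d J ^ (m + 1) * yJ k d J (m + 1))
        else yJ k d J (p : ℕ))
    by_cases h : (p : ℕ) = 0
    · rw [if_pos h, h, yJ_zero, zero_sub, map_neg, map_sum]
      have hterm : ∀ m, sig k d J (tJ k d J ^ (m + 1) * yJ k d J (m + 1)) =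
          tJ k d J ^ (m + 1) * yJ k d J (m + 1)
            - tJ k d J ^ (m + 1 + 1) * yJ k d J (m + 1 + 1) := by
        intro m
        rw [map_mul, map_pow, sig_tJ, sig_yJ k d J _ (by omega), mul_sub, pow_succ']
        ring
      rw [Finset.sum_congr rfl fun m _ => hterm m, Finset.sum_range_sub'
        (f := fun m => tJ k d J ^ (m + 1) * yJ k d J (m + 1))]
      rw [yJ_big k d J (m := d + 1 + 1) (by omega)]
      ring
    · rw [if_neg h, sig_yJ k d J _ (by omega)]
  · simp only [AlgHom.comp_apply]
    rw [gJ, aeval_X, g0J, aeval_X]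
    show (X (Sum.inr j) : MvPolynomial ((Fin d ⊕ Unit) ⊕ J) k) = sig k d J (X (Sum.inr j))
    rw [sig, aeval_X]

def eT : ((Fin d ⊕ Unit) ⊕ J) ≃ Option (Fin d ⊕ J) where
  toFun v := match v with
    | Sum.inl (Sum.inl q) => some (Sum.inl q)
    | Sum.inl (Sum.inr _) => none
    | Sum.inr j => some (Sum.inr j)
  invFun v := match v with
    | none => Sum.inl (Sum.inr ())
    | some (Sum.inl q) => Sum.inl (Sum.inl q)
    | some (Sum.inr j) => Sum.inr j
  left_inv := by rintro ((q | ⟨⟩) | j) <;> rfl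
  right_inv := by rintro (_ | (q | j)) <;> rfl

def eS : (Fin (d + 1) ⊕ J) ≃ Option (Fin d ⊕ J) where
  toFun v := match v with
    | Sum.inl p => if h : (p : ℕ) = 0 then none else some (Sum.inl ⟨(p : ℕ) - 1, by omega⟩)
    | Sum.inr j => some (Sum.inr j)
  invFun v := match v with
    | none => Sum.inl 0
    | some (Sum.inl q) => Sum.inl ⟨(q : ℕ) + 1, by omega⟩
    | some (Sum.inr j) => Sum.inr j
  left_inv := by
    rintro (p | j)
    · by_cases h : (p : ℕ) = 0
      · simp only [dif_pos h]
        exact congrArg Sum.inl (Fin.ext (by simp [h]))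
      · simp only [dif_neg h]
        exact congrArg Sum.inl (Fin.ext (by simp; omega))
    · rfl
  right_inv := by
    rintro (_ | (q | j))
    · simp
    · simp only []
      rw [dif_neg (by simp)]
      simp
    · rfl

end S7

namespace S7
variable (k : Type) [Field k] (d : ℕ) (J : Type)

noncomputable def ET : MvPolynomial ((Fin d ⊕ Unit) ⊕ J) k ≃ₐ[k]
    Polynomial (MvPolynomial (Fin d ⊕ J) k) :=
  (renameEquiv k (eT d J)).trans (optionEquivLeft k (Fin d ⊕ J))

noncomputable def ES : MvPolynomial (Fin (d + 1) ⊕ J) k ≃ₐ[k]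
    Polynomial (MvPolynomial (Fin d ⊕ J) k) :=
  (renameEquiv k (eS d J)).trans (optionEquivLeft k (Fin d ⊕ J))

lemma ET_tJ : ET k d J (tJ k d J) = Polynomial.X := by
  rw [ET, tJ, AlgEquiv.trans_apply, renameEquiv_apply, rename_X]
  exact optionEquivLeft_X_none k (Fin d ⊕ J)

lemma ET_Y (q : Fin d) : ET k d J (X (Sum.inl (Sum.inl q))) = Polynomial.C (X (Sum.inl q)) := by
  rw [ET, AlgEquiv.trans_apply, renameEquiv_apply, rename_X]
  exact optionEquivLeft_X_some k (Fin d ⊕ J) _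

lemma ET_J (j : J) : ET k d J (X (Sum.inr j)) = Polynomial.C (X (Sum.inr j)) := by
  rw [ET, AlgEquiv.trans_apply, renameEquiv_apply, rename_X]
  exact optionEquivLeft_X_some k (Fin d ⊕ J) _

lemma ET_yJ {m : ℕ} (h1 : 1 ≤ m) (h2 : m ≤ d) :
    ET k d J (yJ k d J m) = Polynomial.C (X (Sum.inl ⟨m - 1, by omega⟩)) := by
  rw [yJ_eq_X k d J h1 h2]; exact ET_Y k d J _

lemma ES_x0 : ES k d J (X (Sum.inl 0)) = Polynomial.X := by
  rw [ES, AlgEquiv.trans_apply, renameEquiv_apply, rename_X]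
  have : eS d J (Sum.inl 0) = none := by simp [eS]
  rw [this]
  exact optionEquivLeft_X_none k (Fin d ⊕ J)

lemma ES_xp (p : Fin (d + 1)) (h : (p : ℕ) ≠ 0) :
    ES k d J (X (Sum.inl p)) = Polynomial.C (X (Sum.inl ⟨(p : ℕ) - 1, by omega⟩)) := by
  rw [ES, AlgEquiv.trans_apply, renameEquiv_apply, rename_X]
  have : eS d J (Sum.inl p) = some (Sum.inl ⟨(p : ℕ) - 1, by omega⟩) := by simp [eS, h]; rintro rfl; simp at h
  rw [this]
  exact optionEquivLeft_X_some k (Fin d ⊕ J) _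

lemma ES_J (j : J) : ES k d J (X (Sum.inr j)) = Polynomial.C (X (Sum.inr j)) := by
  rw [ES, AlgEquiv.trans_apply, renameEquiv_apply, rename_X]
  exact optionEquivLeft_X_some k (Fin d ⊕ J) _

noncomputable def Mneg : Polynomial (MvPolynomial (Fin d ⊕ J) k) :=
  ET k d J (g0J k d J (X (Sum.inl 0)))

lemma g0J_x0 : g0J k d J (X (Sum.inl 0)) =
    -(∑ m ∈ Finset.range (d + 1), tJ k d J ^ (m + 1) * yJ k d J (m + 1)) := by
  rw [g0J, aeval_X]
  simp

lemma negMneg : -(Mneg k d J) =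
    ∑ m ∈ Finset.range (d + 1), Polynomial.X ^ (m + 1) * ET k d J (yJ k d J (m + 1)) := by
  rw [Mneg, g0J_x0, map_neg, neg_neg, map_sum]
  exact Finset.sum_congr rfl fun m _ => by rw [map_mul, map_pow, ET_tJ]

lemma negMneg_monic : (-(Mneg k d J)).Monic ∧ (-(Mneg k d J)).natDegree = d + 1 := by
  classical
  rw [negMneg, Finset.sum_range_succ, yJ_top, map_one, mul_one]
  set P : Polynomial (MvPolynomial (Fin d ⊕ J) k) :=
    ∑ m ∈ Finset.range d, Polynomial.X ^ (m + 1) * ET k d J (yJ k d J (m + 1)) with hP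
  have hdegP : P.degree < (d + 1 : ℕ) := by
    rw [hP]
    refine lt_of_le_of_lt (Polynomial.degree_sum_le _ _) ?_
    rw [Finset.sup_lt_iff (by exact_mod_cast WithBot.bot_lt_coe _)]
    intro m hm
    refine lt_of_le_of_lt (Polynomial.degree_mul_le _ _) ?_
    have h1 : (Polynomial.X ^ (m + 1) :
        Polynomial (MvPolynomial (Fin d ⊕ J) k)).degree = (m + 1 : ℕ) :=
      Polynomial.degree_X_pow _
    have h2 := Polynomial.degree_C_le
      (a := (X (Sum.inl ⟨m, by
        simp only [Finset.mem_range] at hm; omega⟩) : MvPolynomial (Fin d ⊕ J) k))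
    rw [ET_yJ k d J (by omega) (by simp only [Finset.mem_range] at hm; omega)]
    calc (Polynomial.X ^ (m+1) : Polynomial (MvPolynomial (Fin d ⊕ J) k)).degree
        + (Polynomial.C (X (Sum.inl ⟨m + 1 - 1, _⟩)) :
            Polynomial (MvPolynomial (Fin d ⊕ J) k)).degree
        ≤ (m + 1 : ℕ) + 0 := by
          rw [h1]
          exact add_le_add le_rfl (Polynomial.degree_C_le)
      _ < (d + 1 : ℕ) := by
          rw [add_zero]
          exact_mod_cast by simp only [Finset.mem_range] at hm; omega
  have hdeg2 : (P + Polynomial.X ^ (d + 1)).degree = ((d + 1 : ℕ) : WithBot ℕ) := by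
    rw [Polynomial.degree_add_eq_right_of_degree_lt
      (by rw [Polynomial.degree_X_pow]; exact hdegP)]
    exact Polynomial.degree_X_pow _
  constructor
  · rw [add_comm]
    exact Polynomial.monic_X_pow_add hdegP
  · exact Polynomial.natDegree_eq_of_degree_eq_some hdeg2

end S7

namespace S7
variable (k : Type) [Field k] (d : ℕ) (J : Type)

lemma comm0 : (ET k d J).toAlgHom.comp (g0J k d J) =
    ((Polynomial.aeval (Mneg k d J)).restrictScalars k).comp (ES k d J).toAlgHom := by
  apply MvPolynomial.algHom_ext
  rintro (p | j)
  · by_cases h : (p : ℕ) = 0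
    · have hp : p = 0 := Fin.ext (by simp [h])
      subst hp
      simp only [AlgHom.comp_apply, AlgEquiv.toAlgHom_eq_coe, AlgHom.coe_coe,
        AlgHom.coe_restrictScalars', AlgEquiv.coe_toAlgHom]
      rw [ES_x0, Polynomial.aeval_X]
      rfl
    · simp only [AlgHom.comp_apply, AlgEquiv.toAlgHom_eq_coe, AlgHom.coe_coe,
        AlgHom.coe_restrictScalars', AlgEquiv.coe_toAlgHom]
      have h1 : g0J k d J (X (Sum.inl p)) = yJ k d J (p : ℕ) := by
        rw [g0J, aeval_X]; simp [h]
      rw [h1, ET_yJ k d J (by omega) (by have := p.isLt; omega), ES_xp k d J p h,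
        Polynomial.aeval_C]
      rfl
  · simp only [AlgHom.comp_apply, AlgEquiv.toAlgHom_eq_coe, AlgHom.coe_coe,
      AlgHom.coe_restrictScalars', AlgEquiv.coe_toAlgHom]
    have h1 : g0J k d J (X (Sum.inr j)) = X (Sum.inr j) := by rw [g0J, aeval_X]
    rw [h1, ET_J, ES_J, Polynomial.aeval_C]
    rfl

lemma comm0' (a : MvPolynomial (Fin (d + 1) ⊕ J) k) :
    ET k d J (g0J k d J a) = (ES k d J a).comp (Mneg k d J) := by
  have := DFunLike.congr_fun (comm0 k d J) a
  simp only [AlgHom.comp_apply, AlgEquiv.toAlgHom_eq_coe, AlgHom.coe_coe,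
    AlgHom.coe_restrictScalars', AlgEquiv.coe_toAlgHom] at this
  rw [this, Polynomial.aeval_def, Polynomial.comp, Polynomial.algebraMap_eq]

lemma key0 : Function.Bijective (fun r : Fin (d + 1) → MvPolynomial (Fin (d + 1) ⊕ J) k =>
    ∑ i, g0J k d J (r i) * tJ k d J ^ (i : ℕ)) := by
  obtain ⟨hmon, hdeg⟩ := negMneg_monic k d J
  have hFC := FCneg hmon hdeg
  have heq : (fun r : Fin (d + 1) → MvPolynomial (Fin (d + 1) ⊕ J) k =>
      ∑ i, g0J k d J (r i) * tJ k d J ^ (i : ℕ)) =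
    ⇑(ET k d J).symm ∘
      ((fun s : Fin (d + 1) → Polynomial (MvPolynomial (Fin d ⊕ J) k) =>
        ∑ i, (s i).comp (Mneg k d J) * Polynomial.X ^ (i : ℕ)) ∘
      (fun r i => ES k d J (r i))) := by
    funext r
    simp only [Function.comp]
    apply (ET k d J).injective
    rw [AlgEquiv.apply_symm_apply, map_sum]
    refine Finset.sum_congr rfl fun i _ => ?_
    rw [map_mul, map_pow, ET_tJ, comm0']
  rw [heq]
  refine ((ET k d J).symm.bijective.comp ?_)
  exact hFC.comp (Equiv.piCongrRight fun _ : Fin (d + 1) => (ES k d J).toEquiv).bijective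

theorem keyJ : Function.Bijective (fun r : Fin (d + 1) → MvPolynomial (Fin (d + 1) ⊕ J) k =>
    ∑ i, gJ k d J (r i) * tJ k d J ^ (i : ℕ)) := by
  have heq : (fun r : Fin (d + 1) → MvPolynomial (Fin (d + 1) ⊕ J) k =>
      ∑ i, gJ k d J (r i) * tJ k d J ^ (i : ℕ)) =
    ⇑(sig k d J) ∘ (fun r : Fin (d + 1) → MvPolynomial (Fin (d + 1) ⊕ J) k =>
      ∑ i, g0J k d J (r i) * tJ k d J ^ (i : ℕ)) := by
    funext r
    simp only [Function.comp, map_sum]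
    refine Finset.sum_congr rfl fun i _ => ?_
    rw [gJ_eq k d J, AlgHom.comp_apply, map_mul, map_pow, sig_tJ]
  rw [heq]
  exact (sigE k d J).bijective.comp (key0 k d J)

end S7

namespace S7
variable (k : Type) [Field k] (d : ℕ)

lemma rename_assoc_yJ (m : ℕ) :
    rename (Equiv.sumAssoc (Fin d) Unit (Fin (d + 1))) (yJ k d (Fin (d + 1)) m) = aRm k d m := by
  rw [yJ, aRm]
  split_ifs with h1 h2
  · rw [rename_X]; rfl
  · exact map_one _
  · exact map_zero _

lemma f1_eq : f1 k d =
    (renameEquiv k (Equiv.sumAssoc (Fin d) Unit (Fin (d + 1)))).toAlgHom.comp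
      (gJ k d (Fin (d + 1))) := by
  apply MvPolynomial.algHom_ext
  rintro (p | q)
  · simp only [AlgHom.comp_apply, AlgEquiv.toAlgHom_eq_coe, AlgHom.coe_coe]
    rw [f1, aeval_X, gJ, aeval_X]
    show aRm k d p - X (Sum.inr (Sum.inl ())) * aRm k d ((p : ℕ) + 1) =
      renameEquiv k (Equiv.sumAssoc (Fin d) Unit (Fin (d + 1)))
        (yJ k d (Fin (d + 1)) (p : ℕ) - tJ k d (Fin (d + 1)) * yJ k d (Fin (d + 1)) ((p : ℕ) + 1))
    rw [map_sub, map_mul, renameEquiv_apply, renameEquiv_apply, renameEquiv_apply,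
      rename_assoc_yJ, rename_assoc_yJ, tJ, rename_X]
    rfl
  · simp only [AlgHom.comp_apply, AlgEquiv.toAlgHom_eq_coe, AlgHom.coe_coe, AlgEquiv.coe_toAlgHom]
    rw [f1, aeval_X, gJ, aeval_X]
    show (X (Sum.inr (Sum.inr q)) : MvPolynomial (RVar d) k) = _
    rw [renameEquiv_apply, rename_X]
    rfl

def e2 : RVar d ≃ (Fin (d + 1) ⊕ (Fin d ⊕ Unit)) where
  toFun v := match v with
    | Sum.inl p => Sum.inr (Sum.inl p)
    | Sum.inr (Sum.inl _) => Sum.inr (Sum.inr ())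
    | Sum.inr (Sum.inr q) => Sum.inl q
  invFun v := match v with
    | Sum.inl q => Sum.inr (Sum.inr q)
    | Sum.inr (Sum.inl p) => Sum.inl p
    | Sum.inr (Sum.inr _) => Sum.inr (Sum.inl ())
  left_inv := by rintro (p | (⟨⟩ | q)) <;> rfl
  right_inv := by rintro (q | (p | ⟨⟩)) <;> rfl

lemma rename_comm_yJ (m : ℕ) :
    rename (Equiv.sumComm (Fin d ⊕ Unit) (Fin d ⊕ Unit))
      (yJ k d (Fin d ⊕ Unit) m) = bCm k d m := by
  rw [yJ, bCm]
  split_ifs with h1 h2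
  · rw [rename_X]; rfl
  · exact map_one _
  · exact map_zero _

lemma renameEquiv_X {σ τ : Type} (e : σ ≃ τ) (v : σ) :
    renameEquiv k e (X v) = (X (e v) : MvPolynomial τ k) := by
  rw [renameEquiv_apply, rename_X]

lemma f3_eq : f3 k d =
    (renameEquiv k (Equiv.sumComm (Fin d ⊕ Unit) (Fin d ⊕ Unit))).toAlgHom.comp
      ((gJ k d (Fin d ⊕ Unit)).comp (renameEquiv k (e2 d)).toAlgHom) := by
  apply MvPolynomial.algHom_ext
  rintro (p | (⟨⟩ | q))
  · simp only [AlgHom.comp_apply, AlgEquiv.toAlgHom_eq_coe, AlgHom.coe_coe, AlgEquiv.coe_toAlgHom]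
    rw [f3, aeval_X, renameEquiv_X, show e2 d (Sum.inl p) = Sum.inr (Sum.inl p) from rfl,
      gJ, aeval_X]
    show (X (Sum.inl (Sum.inl p)) : MvPolynomial (CVar d) k) =
      renameEquiv k (Equiv.sumComm (Fin d ⊕ Unit) (Fin d ⊕ Unit)) (X (Sum.inr (Sum.inl p)))
    rw [renameEquiv_X]
    rfl
  · simp only [AlgHom.comp_apply, AlgEquiv.toAlgHom_eq_coe, AlgHom.coe_coe, AlgEquiv.coe_toAlgHom]
    rw [f3, aeval_X, renameEquiv_X,
      show e2 d (Sum.inr (Sum.inl ())) = Sum.inr (Sum.inr ()) from rfl, gJ, aeval_X]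
    show (X (Sum.inl (Sum.inr ())) : MvPolynomial (CVar d) k) =
      renameEquiv k (Equiv.sumComm (Fin d ⊕ Unit) (Fin d ⊕ Unit)) (X (Sum.inr (Sum.inr ())))
    rw [renameEquiv_X]
    rfl
  · simp only [AlgHom.comp_apply, AlgEquiv.toAlgHom_eq_coe, AlgHom.coe_coe, AlgEquiv.coe_toAlgHom]
    rw [f3, aeval_X, renameEquiv_X, show e2 d (Sum.inr (Sum.inr q)) = Sum.inl q from rfl,
      gJ, aeval_X]
    show bCm k d q - X (Sum.inr (Sum.inr ())) * bCm k d ((q : ℕ) + 1) =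
      renameEquiv k (Equiv.sumComm (Fin d ⊕ Unit) (Fin d ⊕ Unit))
        (yJ k d (Fin d ⊕ Unit) (q : ℕ) -
          tJ k d (Fin d ⊕ Unit) * yJ k d (Fin d ⊕ Unit) ((q : ℕ) + 1))
    rw [map_sub, map_mul, renameEquiv_apply, renameEquiv_apply, renameEquiv_apply,
      rename_comm_yJ, rename_comm_yJ, tJ, rename_X]
    rfl

end S7

namespace S7
variable (k : Type) [Field k] (d : ℕ)

noncomputable def f2' : MvPolynomial (RVar d) k →ₐ[k] MvPolynomial (RVar d) k :=
  aeval (fun v => match v with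
    | Sum.inr (Sum.inr q) =>
        if (q : ℕ) = d then X (Sum.inr (Sum.inr q)) - X (Sum.inr (Sum.inl ()))
        else X (Sum.inr (Sum.inr q))
    | v => X v)

lemma f2_bijective : Function.Bijective (f2 k d) := by
  have h1 : (f2' k d).comp (f2 k d) = AlgHom.id k _ := by
    apply MvPolynomial.algHom_ext
    rintro (p | (⟨⟩ | q))
    · simp only [AlgHom.comp_apply, AlgHom.id_apply]
      rw [f2, aeval_X]
      show f2' k d (X (Sum.inl p)) = _
      rw [f2', aeval_X]
    · simp only [AlgHom.comp_apply, AlgHom.id_apply]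
      rw [f2, aeval_X]
      show f2' k d (X (Sum.inr (Sum.inl ()))) = _
      rw [f2', aeval_X]
    · simp only [AlgHom.comp_apply, AlgHom.id_apply]
      rw [f2, aeval_X]
      show f2' k d (if (q : ℕ) = d then X (Sum.inr (Sum.inr q)) + X (Sum.inr (Sum.inl ()))
        else X (Sum.inr (Sum.inr q))) = _
      by_cases h : (q : ℕ) = d
      · rw [if_pos h, map_add]
        rw [show f2' k d (X (Sum.inr (Sum.inr q))) =
            X (Sum.inr (Sum.inr q)) - X (Sum.inr (Sum.inl ())) from by
          rw [f2', aeval_X]; simp [h]]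
        rw [show f2' k d (X (Sum.inr (Sum.inl ()))) = X (Sum.inr (Sum.inl ())) from by
          rw [f2', aeval_X]]
        ring
      · rw [if_neg h, f2', aeval_X]
        simp [h]
  have h2 : (f2 k d).comp (f2' k d) = AlgHom.id k _ := by
    apply MvPolynomial.algHom_ext
    rintro (p | (⟨⟩ | q))
    · simp only [AlgHom.comp_apply, AlgHom.id_apply]
      rw [f2', aeval_X]
      show f2 k d (X (Sum.inl p)) = _
      rw [f2, aeval_X]
    · simp only [AlgHom.comp_apply, AlgHom.id_apply]
      rw [f2', aeval_X]
      show f2 k d (X (Sum.inr (Sum.inl ()))) = _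
      rw [f2, aeval_X]
    · simp only [AlgHom.comp_apply, AlgHom.id_apply]
      rw [f2', aeval_X]
      show f2 k d (if (q : ℕ) = d then X (Sum.inr (Sum.inr q)) - X (Sum.inr (Sum.inl ()))
        else X (Sum.inr (Sum.inr q))) = _
      by_cases h : (q : ℕ) = d
      · rw [if_pos h, map_sub]
        rw [show f2 k d (X (Sum.inr (Sum.inr q))) =
            X (Sum.inr (Sum.inr q)) + X (Sum.inr (Sum.inl ())) from by
          rw [f2, aeval_X]; simp [h]]
        rw [show f2 k d (X (Sum.inr (Sum.inl ()))) = X (Sum.inr (Sum.inl ())) from by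
          rw [f2, aeval_X]]
        ring
      · rw [if_neg h, f2, aeval_X]
        simp [h]
  exact (AlgEquiv.ofAlgHom (f2 k d) (f2' k d) h2 h1).bijective

lemma Psi_bijective : Function.Bijective
    (fun r : Fin (d + 1) → MvPolynomial (AVar d) k =>
      ∑ i, f1 k d (r i) * X (Sum.inr (Sum.inl ())) ^ (i : ℕ)) := by
  have heq : (fun r : Fin (d + 1) → MvPolynomial (AVar d) k =>
      ∑ i, f1 k d (r i) * X (Sum.inr (Sum.inl ())) ^ (i : ℕ)) =
    ⇑(renameEquiv k (Equiv.sumAssoc (Fin d) Unit (Fin (d + 1)))) ∘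
      (fun r : Fin (d + 1) → MvPolynomial (Fin (d + 1) ⊕ Fin (d + 1)) k =>
        ∑ i, gJ k d (Fin (d + 1)) (r i) * tJ k d (Fin (d + 1)) ^ (i : ℕ)) := by
    funext r
    simp only [Function.comp, map_sum]
    refine Finset.sum_congr rfl fun i _ => ?_
    rw [f1_eq k d, AlgHom.comp_apply, map_mul, map_pow]
    simp only [AlgEquiv.toAlgHom_eq_coe, AlgHom.coe_coe, AlgEquiv.coe_toAlgHom]
    rw [tJ, renameEquiv_X]
    rfl
  rw [heq]
  exact (renameEquiv k (Equiv.sumAssoc (Fin d) Unit (Fin (d + 1)))).bijective.comp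
    (keyJ k d (Fin (d + 1)))

lemma Theta_bijective : Function.Bijective
    (fun t : Fin (d + 1) → MvPolynomial (RVar d) k =>
      ∑ j, f3 k d (t j) * X (Sum.inr (Sum.inr ())) ^ (j : ℕ)) := by
  have heq : (fun t : Fin (d + 1) → MvPolynomial (RVar d) k =>
      ∑ j, f3 k d (t j) * X (Sum.inr (Sum.inr ())) ^ (j : ℕ)) =
    ⇑(renameEquiv k (Equiv.sumComm (Fin d ⊕ Unit) (Fin d ⊕ Unit))) ∘
      ((fun s : Fin (d + 1) → MvPolynomial (Fin (d + 1) ⊕ (Fin d ⊕ Unit)) k =>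
        ∑ j, gJ k d (Fin d ⊕ Unit) (s j) * tJ k d (Fin d ⊕ Unit) ^ (j : ℕ)) ∘
      (fun t j => renameEquiv k (e2 d) (t j))) := by
    funext t
    simp only [Function.comp, map_sum]
    refine Finset.sum_congr rfl fun j _ => ?_
    rw [f3_eq k d, AlgHom.comp_apply, AlgHom.comp_apply, map_mul, map_pow]
    simp only [AlgEquiv.toAlgHom_eq_coe, AlgHom.coe_coe, AlgEquiv.coe_toAlgHom]
    rw [tJ, renameEquiv_X]
    rfl
  rw [heq]
  exact (renameEquiv k (Equiv.sumComm (Fin d ⊕ Unit) (Fin d ⊕ Unit))).bijective.comp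
    ((keyJ k d (Fin d ⊕ Unit)).comp
      (Equiv.piCongrRight fun _ : Fin (d + 1) => (renameEquiv k (e2 d)).toEquiv).bijective)

end S7


/-- `C` is free as a module over `A_{d+1}` (acting through
`f_3 ∘ f_2 ∘ f_1`) with basis `{c'^i c''^j : 0 ≤ i,j ≤ d}`: the map
`(r_{ij}) ↦ ∑ (f_3∘f_2∘f_1)(r_{ij})·c'^i·c''^j` is bijective. -/
theorem statement7 (k : Type) [Field k] (d : ℕ) :
    Function.Bijective
      (fun r : Fin (d + 1) × Fin (d + 1) → MvPolynomial (AVar d) k =>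
        ∑ p : Fin (d + 1) × Fin (d + 1),
          ((f3 k d).comp ((f2 k d).comp (f1 k d))) (r p) *
            X (Sum.inl (Sum.inr ())) ^ (p.1 : ℕ) *
            X (Sum.inr (Sum.inr ())) ^ (p.2 : ℕ)) := by
  classical
  have hf2c : f2 k d (X (Sum.inr (Sum.inl ())) : MvPolynomial (RVar d) k) =
      X (Sum.inr (Sum.inl ())) := by rw [f2, aeval_X]
  have hf3c : f3 k d (X (Sum.inr (Sum.inl ())) : MvPolynomial (RVar d) k) =
      X (Sum.inl (Sum.inr ())) := by rw [f3, aeval_X]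
  have hfac : (fun r : Fin (d + 1) × Fin (d + 1) → MvPolynomial (AVar d) k =>
      ∑ p : Fin (d + 1) × Fin (d + 1),
        ((f3 k d).comp ((f2 k d).comp (f1 k d))) (r p) *
          X (Sum.inl (Sum.inr ())) ^ (p.1 : ℕ) *
          X (Sum.inr (Sum.inr ())) ^ (p.2 : ℕ)) =
    (fun t : Fin (d + 1) → MvPolynomial (RVar d) k =>
        ∑ j, f3 k d (t j) * X (Sum.inr (Sum.inr ())) ^ (j : ℕ)) ∘
      ((fun s : Fin (d + 1) → MvPolynomial (RVar d) k => fun j => f2 k d (s j)) ∘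
      ((fun u : Fin (d + 1) → (Fin (d + 1) → MvPolynomial (AVar d) k) => fun j =>
        ∑ i, f1 k d (u j i) * X (Sum.inr (Sum.inl ())) ^ (i : ℕ)) ∘
      (fun r : Fin (d + 1) × Fin (d + 1) → MvPolynomial (AVar d) k =>
        fun j i => r (i, j)))) := by
    funext r
    simp only [Function.comp]
    have step : ∀ j : Fin (d + 1),
        f3 k d (f2 k d (∑ i, f1 k d (r (i, j)) * X (Sum.inr (Sum.inl ())) ^ (i : ℕ))) =
        ∑ i, f3 k d (f2 k d (f1 k d (r (i, j)))) * X (Sum.inl (Sum.inr ())) ^ (i : ℕ) := by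
      intro j
      rw [map_sum, map_sum]
      refine Finset.sum_congr rfl fun i _ => ?_
      rw [map_mul, map_pow, hf2c, map_mul, map_pow, hf3c]
    have rhs_eq : ∑ j : Fin (d + 1),
        f3 k d (f2 k d (∑ i, f1 k d (r (i, j)) * X (Sum.inr (Sum.inl ())) ^ (i : ℕ))) *
          X (Sum.inr (Sum.inr ())) ^ (j : ℕ)
        = ∑ j : Fin (d + 1), ∑ i : Fin (d + 1),
            f3 k d (f2 k d (f1 k d (r (i, j)))) *
              X (Sum.inl (Sum.inr ())) ^ (i : ℕ) * X (Sum.inr (Sum.inr ())) ^ (j : ℕ) := by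
      refine Finset.sum_congr rfl fun j _ => ?_
      rw [step j, Finset.sum_mul]
    rw [rhs_eq]
    rw [Fintype.sum_prod_type]
    rw [Finset.sum_comm]
    refine Finset.sum_congr rfl fun j _ => Finset.sum_congr rfl fun i _ => ?_
    rw [AlgHom.comp_apply, AlgHom.comp_apply]
  rw [hfac]
  have hW : Function.Bijective
      (fun r : Fin (d + 1) × Fin (d + 1) → MvPolynomial (AVar d) k =>
        fun j i => r (i, j)) := by
    refine Function.bijective_iff_has_inverse.mpr ⟨fun u p => u p.2 p.1, fun r => ?_, fun u => ?_⟩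
    · funext p; rfl
    · funext j i; rfl
  have hF1 : Function.Bijective
      (fun u : Fin (d + 1) → (Fin (d + 1) → MvPolynomial (AVar d) k) => fun j =>
        ∑ i, f1 k d (u j i) * X (Sum.inr (Sum.inl ())) ^ (i : ℕ)) :=
    (Equiv.piCongrRight fun _ : Fin (d + 1) =>
      Equiv.ofBijective _ (S7.Psi_bijective k d)).bijective
  have hF2 : Function.Bijective
      (fun s : Fin (d + 1) → MvPolynomial (RVar d) k => fun j => f2 k d (s j)) :=
    (Equiv.piCongrRight fun _ : Fin (d + 1) =>
      Equiv.ofBijective _ (S7.f2_bijective k d)).bijective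
  exact (S7.Theta_bijective k d).comp (hF2.comp (hF1.comp hW))
end

section
/- Let k be a field and d ≥ 0. Regard B_d as an A_{d+1}-module via f. Let L_1 and L_0 be free A_{d+1}-modules with bases (e_{ij})_{0≤i,j≤d} and (f_{ij})_{0≤i,j≤d} respectively. Define A_{d+1}-module maps d_0 : L_0 → B_d by d_0(f_{ij}) = c^{i+j}, and d_1 : L_1 → L_0 by d_1(e_{ij}) = f_{i+1,j} − f_{i,j+1} for 0 ≤ i, j < d; d_1(e_{dj}) = −(a_1 f_{0j} + a_2 f_{1j} + ⋯ + a_{d+1} f_{dj} + f_{d,j+1}) for 0 ≤ j < d; and d_1(e_{id}) = b_1 f_{i0} + b_2 f_{i1} + ⋯ + b_{d+1} f_{id} for 0 ≤ i ≤ d (here a_s, b_s denote the variables of A_{d+1}). Then the sequence 0 → L_1 →^{d_1} L_0 →^{d_0} B_d → 0 is exact: d_1 is injective, d_0 is surjective, and ker d_0 = im d_1. -/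
open MvPolynomial

/-- `f_4 : C → B_d`, `a_i ↦ a_i`, `b_i ↦ b_i`, `c' ↦ c`, `c'' ↦ c`. -/
noncomputable def f4 (k : Type) [Field k] (d : ℕ) :
    MvPolynomial (CVar d) k →ₐ[k] MvPolynomial (BVar d) k :=
  aeval (fun v => match v with
    | Sum.inl (Sum.inl p) => X (Sum.inl (Sum.inl p))
    | Sum.inl (Sum.inr ()) => X (Sum.inr ())
    | Sum.inr (Sum.inl p) => X (Sum.inl (Sum.inr p))
    | Sum.inr (Sum.inr ()) => X (Sum.inr ()))

/-- `a_m` in `B_d` with conventions `a_0 = 0`, `a_{d+1} = 1`. -/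
noncomputable def aBm (k : Type) [Field k] (d : ℕ) (m : ℕ) : MvPolynomial (BVar d) k :=
  if h : 1 ≤ m ∧ m ≤ d then X (Sum.inl (Sum.inl (⟨m - 1, by omega⟩ : Fin d)))
  else if m = d + 1 then 1 else 0

/-- `b_m` in `B_d` with conventions `b_0 = 0`, `b_{d+1} = 0`. -/
noncomputable def bBm (k : Type) [Field k] (d : ℕ) (m : ℕ) : MvPolynomial (BVar d) k :=
  if h : 1 ≤ m ∧ m ≤ d then X (Sum.inl (Sum.inr (⟨m - 1, by omega⟩ : Fin d)))
  else 0

/-- `f : A_{d+1} → B_d`, `a_i ↦ a_{i-1} - c·a_i`, `b_i ↦ b_{i-1} - c·b_i`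
with `a_0 = b_0 = b_{d+1} = 0` and `a_{d+1} = 1` in `B_d`. -/
noncomputable def fmap (k : Type) [Field k] (d : ℕ) :
    MvPolynomial (AVar d) k →ₐ[k] MvPolynomial (BVar d) k :=
  aeval (fun v => match v with
    | Sum.inl p => aBm k d p - X (Sum.inr ()) * aBm k d ((p : ℕ) + 1)
    | Sum.inr q => bBm k d q - X (Sum.inr ()) * bBm k d ((q : ℕ) + 1))



/-- The standard basis vector `f_q` (or `e_q`) of the free module
`Fin (d+1) × Fin (d+1) → A_{d+1}`. -/
noncomputable def fbas (k : Type) [Field k] (d : ℕ) (q : Fin (d + 1) × Fin (d + 1)) :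
    Fin (d + 1) × Fin (d + 1) → MvPolynomial (AVar d) k :=
  Pi.single q 1

/-- The image under `d_1` of the basis vector `e_{ij}` (`p = (i,j)`), in the free
module `L_0` with basis `(f_{ij})`:
`d_1(e_{ij}) = f_{i+1,j} - f_{i,j+1}` for `i, j < d`;
`d_1(e_{dj}) = -(a_1 f_{0j} + ⋯ + a_{d+1} f_{dj} + f_{d,j+1})` for `j < d`;
`d_1(e_{id}) = b_1 f_{i0} + ⋯ + b_{d+1} f_{id}`. -/
noncomputable def d1row (k : Type) [Field k] (d : ℕ) (p : Fin (d + 1) × Fin (d + 1)) :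
    Fin (d + 1) × Fin (d + 1) → MvPolynomial (AVar d) k :=
  if hj : (p.2 : ℕ) = d then
    ∑ s : Fin (d + 1), (X (Sum.inr s) : MvPolynomial (AVar d) k) • fbas k d (p.1, s)
  else if hi : (p.1 : ℕ) = d then
    -((∑ s : Fin (d + 1),
        (X (Sum.inl s) : MvPolynomial (AVar d) k) • fbas k d (s, p.2)) +
      fbas k d (p.1, (⟨(p.2 : ℕ) + 1, by have := p.2.isLt; omega⟩ : Fin (d + 1))))
  else
    fbas k d ((⟨(p.1 : ℕ) + 1, by have := p.1.isLt; omega⟩ : Fin (d + 1)), p.2) -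
      fbas k d (p.1, (⟨(p.2 : ℕ) + 1, by have := p.2.isLt; omega⟩ : Fin (d + 1)))

/-- The map `d_1 : L_1 → L_0`. -/
noncomputable def D1 (k : Type) [Field k] (d : ℕ)
    (g : Fin (d + 1) × Fin (d + 1) → MvPolynomial (AVar d) k) :
    Fin (d + 1) × Fin (d + 1) → MvPolynomial (AVar d) k :=
  ∑ p : Fin (d + 1) × Fin (d + 1), g p • d1row k d p

/-- The map `d_0 : L_0 → B_d`, `f_{ij} ↦ c^{i+j}`, `A_{d+1}`-linear via `f`. -/
noncomputable def D0 (k : Type) [Field k] (d : ℕ)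
    (g : Fin (d + 1) × Fin (d + 1) → MvPolynomial (AVar d) k) :
    MvPolynomial (BVar d) k :=
  ∑ p : Fin (d + 1) × Fin (d + 1),
    fmap k d (g p) * X (Sum.inr ()) ^ ((p.1 : ℕ) + (p.2 : ℕ))



namespace St9

variable (k : Type) [Field k] (d : ℕ) (W : Type)

/-- the variable `t` of the target ring. -/
noncomputable def tv : MvPolynomial (Fin d ⊕ (Unit ⊕ W)) k := X (Sum.inr (Sum.inl ()))

/-- `v_m` in the target ring, with conventions `v_0 = 0`, `v_{d+1} = 1`. -/
noncomputable def vR (m : ℕ) : MvPolynomial (Fin d ⊕ (Unit ⊕ W)) k :=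
  if h : 1 ≤ m ∧ m ≤ d then X (Sum.inl (⟨m - 1, by omega⟩ : Fin d))
  else if m = d + 1 then 1 else 0

/-- the generic "shift" algebra map. -/
noncomputable def Gg : MvPolynomial (Fin (d+1) ⊕ W) k →ₐ[k] MvPolynomial (Fin d ⊕ (Unit ⊕ W)) k :=
  aeval (fun v => match v with
    | Sum.inl p => vR k d W p - tv k d W * vR k d W ((p : ℕ) + 1)
    | Sum.inr w => X (Sum.inr (Sum.inr w)))

/-- the linear-combination map whose bijectivity expresses freeness. -/
noncomputable def PhiW (g : Fin (d+1) → MvPolynomial (Fin (d+1) ⊕ W) k) :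
    MvPolynomial (Fin d ⊕ (Unit ⊕ W)) k :=
  ∑ i : Fin (d+1), Gg k d W (g i) * tv k d W ^ (i : ℕ)

lemma Gg_Xinl (p : Fin (d+1)) :
    Gg k d W (X (Sum.inl p)) = vR k d W p - tv k d W * vR k d W ((p : ℕ) + 1) := by
  simp [Gg]

lemma Gg_Xinr (w : W) : Gg k d W (X (Sum.inr w)) = X (Sum.inr (Sum.inr w)) := by
  simp [Gg]

lemma vR_zero : vR k d W 0 = 0 := by simp [vR]

lemma vR_succ_top : vR k d W (d+1) = 1 := by simp [vR]

lemma key0 : ∑ i : Fin (d+1), Gg k d W (X (Sum.inl i)) * tv k d W ^ (i : ℕ)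
    = - tv k d W ^ (d+1) := by
  have : ∀ i : Fin (d+1), Gg k d W (X (Sum.inl i)) * tv k d W ^ (i : ℕ)
      = vR k d W i * tv k d W ^ (i:ℕ) - vR k d W ((i:ℕ)+1) * tv k d W ^ ((i:ℕ)+1) := by
    intro i
    rw [Gg_Xinl]
    ring
  rw [Finset.sum_congr rfl (fun i _ => this i)]
  rw [Fin.sum_univ_eq_sum_range (fun m => vR k d W m * tv k d W ^ m
      - vR k d W (m+1) * tv k d W ^ (m+1))]
  rw [Finset.sum_range_sub' (fun m => vR k d W m * tv k d W ^ m)]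
  simp [vR_zero, vR_succ_top]


/-- downward recursion `alQ 0 = 1`, `alQ (j+1) = a_{d-j+1} + X * alQ j`;
`alQ j` plays the role of `α_{d+1-j}`. -/
noncomputable def alQ : ℕ → Polynomial (MvPolynomial (Fin (d+1) ⊕ W) k)
  | 0 => 1
  | (j+1) => Polynomial.C (X (Sum.inl (⟨d - j, by omega⟩ : Fin (d+1))))
      + Polynomial.X * alQ j

lemma alQ_monic : ∀ j, (alQ k d W j).Monic ∧ (alQ k d W j).degree = (j : ℕ) := by
  intro j
  induction j with
  | zero => exact ⟨Polynomial.monic_one, Polynomial.degree_one⟩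
  | succ j ih =>
    have hm : (Polynomial.X * alQ k d W j).Monic := Polynomial.monic_X.mul ih.1
    have hd : (Polynomial.X * alQ k d W j).degree = ((j+1 : ℕ) : WithBot ℕ) := by
      rw [Polynomial.degree_mul, Polynomial.degree_X, ih.2]
      rw [← Nat.cast_one, ← Nat.cast_add, Nat.add_comm]
    have hlt : (Polynomial.C (X (Sum.inl (⟨d - j, by omega⟩ : Fin (d+1)))) :
        Polynomial (MvPolynomial (Fin (d+1) ⊕ W) k)).degree
        < (Polynomial.X * alQ k d W j).degree := by
      rw [hd]
      refine lt_of_le_of_lt Polynomial.degree_C_le ?_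
      exact_mod_cast WithBot.coe_lt_coe.mpr (Nat.succ_pos j)
    refine ⟨hm.add_of_right hlt, ?_⟩
    rw [show alQ k d W (j+1) = Polynomial.C (X (Sum.inl (⟨d - j, by omega⟩ : Fin (d+1))))
      + Polynomial.X * alQ k d W j from rfl]
    rw [Polynomial.degree_add_eq_right_of_degree_lt hlt, hd]

/-- the monic polynomial of degree `d+1`. -/
noncomputable def PP : Polynomial (MvPolynomial (Fin (d+1) ⊕ W) k) := alQ k d W (d+1)

lemma PP_monic : (PP k d W).Monic := (alQ_monic k d W (d+1)).1

lemma PP_degree : (PP k d W).degree = ((d+1 : ℕ) : WithBot ℕ) := (alQ_monic k d W (d+1)).2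

/-- the retraction-ish map into `AdjoinRoot PP`. -/
noncomputable def psiW : MvPolynomial (Fin d ⊕ (Unit ⊕ W)) k →ₐ[k] AdjoinRoot (PP k d W) :=
  aeval (fun v => match v with
    | Sum.inl p => AdjoinRoot.mk (PP k d W) (alQ k d W (d - (p : ℕ)))
    | Sum.inr (Sum.inl ()) => AdjoinRoot.root (PP k d W)
    | Sum.inr (Sum.inr w) => AdjoinRoot.of (PP k d W) (X (Sum.inr w)))

lemma psiW_tv : psiW k d W (tv k d W) = AdjoinRoot.root (PP k d W) := by
  simp [psiW, tv]

lemma psiW_vR (m : ℕ) (hm : m ≤ d + 1) :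
    psiW k d W (vR k d W m) = AdjoinRoot.mk (PP k d W) (alQ k d W (d + 1 - m)) := by
  rcases Nat.eq_zero_or_pos m with h0 | h1
  · subst h0
    simp only [vR_zero, map_zero, Nat.sub_zero]
    exact (AdjoinRoot.mk_self).symm
  rcases Nat.lt_or_ge m (d+1) with h2 | h2
  · have h : 1 ≤ m ∧ m ≤ d := ⟨h1, by omega⟩
    rw [vR, dif_pos h]
    have : d - ((⟨m - 1, by omega⟩ : Fin d) : ℕ) = d + 1 - m := by simp; omega
    simp only [psiW, aeval_X]
    rw [this]
  · have hm1 : m = d + 1 := by omega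
    subst hm1
    rw [vR_succ_top]
    simp only [Nat.sub_self]
    rw [show alQ k d W 0 = 1 from rfl, map_one, map_one]

lemma psiW_Gg (s : MvPolynomial (Fin (d+1) ⊕ W) k) :
    psiW k d W (Gg k d W s) = AdjoinRoot.of (PP k d W) s := by
  have : (psiW k d W).toRingHom.comp (Gg k d W).toRingHom = AdjoinRoot.of (PP k d W) := by
    apply MvPolynomial.ringHom_ext
    · intro a
      simp only [RingHom.comp_apply, AlgHom.toRingHom_eq_coe, RingHom.coe_coe]
      rw [show (C a : MvPolynomial (Fin (d+1) ⊕ W) k) = algebraMap k _ a from rfl,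
        AlgHom.commutes, AlgHom.commutes]
      rfl
    · intro v
      simp only [RingHom.comp_apply, AlgHom.toRingHom_eq_coe, RingHom.coe_coe]
      match v with
      | Sum.inl p =>
        rw [Gg_Xinl, map_sub, map_mul, psiW_tv, psiW_vR k d W p p.isLt.le,
          psiW_vR k d W ((p:ℕ)+1) (by omega)]
        have h1 : d + 1 - (p : ℕ) = (d - (p:ℕ)) + 1 := by omega
        have h2 : d + 1 - ((p : ℕ) + 1) = d - (p:ℕ) := by omega
        rw [h1, h2]
        rw [show alQ k d W ((d - (p:ℕ))+1) = Polynomial.C (X (Sum.inl (⟨d - (d - (p:ℕ)), by omega⟩ : Fin (d+1))))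
          + Polynomial.X * alQ k d W (d - (p:ℕ)) from rfl]
        have hr : AdjoinRoot.root (PP k d W) = AdjoinRoot.mk (PP k d W) Polynomial.X := rfl
        rw [hr, ← map_mul, ← map_sub]
        have : (⟨d - (d - (p:ℕ)), by omega⟩ : Fin (d+1)) = p := by
          ext; simp; omega
        rw [this]
        rw [add_sub_cancel_right]
        rfl
      | Sum.inr w =>
        rw [Gg_Xinr]
        simp [psiW]
  exact congrFun (congrArg (fun (f : _ →+* _) => (f : _ → _)) this) s

end St9

namespace St9
variable (k : Type) [Field k] (d : ℕ) (W : Type)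

lemma PhiW_injective : Function.Injective (PhiW k d W) := by
  have hker : ∀ g, PhiW k d W g = 0 → g = 0 := by
    intro g hg
    have h1 : psiW k d W (PhiW k d W g) = 0 := by rw [hg, map_zero]
    rw [PhiW, map_sum] at h1
    have h2 : ∀ i : Fin (d+1), psiW k d W (Gg k d W (g i) * tv k d W ^ (i:ℕ))
        = AdjoinRoot.mk (PP k d W) (Polynomial.C (g i) * Polynomial.X ^ (i:ℕ)) := by
      intro i
      rw [map_mul, map_pow, psiW_tv, psiW_Gg]
      rw [show AdjoinRoot.of (PP k d W) (g i)
        = AdjoinRoot.mk (PP k d W) (Polynomial.C (g i)) from rfl]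
      rw [show AdjoinRoot.root (PP k d W) = AdjoinRoot.mk (PP k d W) Polynomial.X from rfl]
      rw [← map_pow, ← map_mul]
    rw [Finset.sum_congr rfl (fun i _ => h2 i), ← map_sum] at h1
    have h3 : PP k d W ∣ ∑ i : Fin (d+1), Polynomial.C (g i) * Polynomial.X ^ (i:ℕ) :=
      AdjoinRoot.mk_eq_zero.mp h1
    have h4 : (∑ i : Fin (d+1), Polynomial.C (g i) * Polynomial.X ^ (i:ℕ)) = 0 := by
      by_contra hne
      have hd := Polynomial.degree_le_of_dvd h3 hne
      rw [PP_degree] at hd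
      have hle : (∑ i : Fin (d+1), Polynomial.C (g i) * Polynomial.X ^ (i:ℕ)).degree
          ≤ (d : WithBot ℕ) := by
        refine (Polynomial.degree_sum_le _ _).trans ?_
        refine Finset.sup_le fun i _ => ?_
        refine (Polynomial.degree_C_mul_X_pow_le _ _).trans ?_
        exact_mod_cast WithBot.coe_le_coe.mpr (by omega : (i:ℕ) ≤ d)
      have hcon : ((d+1 : ℕ) : WithBot ℕ) ≤ ((d:ℕ) : WithBot ℕ) := hd.trans hle
      have := WithBot.coe_le_coe.mp (by exact_mod_cast hcon)
      omega
    funext i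
    have := congrArg (fun q => Polynomial.coeff q (i : ℕ)) h4
    simp only [Polynomial.finset_sum_coeff, Polynomial.coeff_C_mul,
      Polynomial.coeff_X_pow, Polynomial.coeff_zero] at this
    rw [Finset.sum_eq_single i] at this
    · simpa using this
    · intro b _ hb
      have hbi : (i : ℕ) ≠ (b : ℕ) := fun h => hb (Fin.ext h.symm)
      simp [hbi]
    · intro h; exact absurd (Finset.mem_univ i) h
  intro g1 g2 h
  have : PhiW k d W (g1 - g2) = 0 := by
    rw [PhiW]
    have : ∀ i : Fin (d+1), Gg k d W ((g1 - g2) i) * tv k d W ^ (i:ℕ)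
        = Gg k d W (g1 i) * tv k d W ^ (i:ℕ) - Gg k d W (g2 i) * tv k d W ^ (i:ℕ) := by
      intro i
      simp [map_sub, sub_mul]
    rw [Finset.sum_congr rfl (fun i _ => this i), Finset.sum_sub_distrib]
    rw [show (∑ i : Fin (d+1), Gg k d W (g1 i) * tv k d W ^ (i:ℕ)) = PhiW k d W g1 from rfl,
      show (∑ i : Fin (d+1), Gg k d W (g2 i) * tv k d W ^ (i:ℕ)) = PhiW k d W g2 from rfl,
      h, sub_self]
  exact sub_eq_zero.mp (hker _ this)

end St9

namespace St9
variable (k : Type) [Field k] (d : ℕ) (W : Type)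

lemma PhiW_add (g g' : Fin (d+1) → MvPolynomial (Fin (d+1) ⊕ W) k) :
    PhiW k d W (g + g') = PhiW k d W g + PhiW k d W g' := by
  rw [PhiW, PhiW, PhiW, ← Finset.sum_add_distrib]
  refine Finset.sum_congr rfl fun i _ => ?_
  simp [map_add, add_mul]

lemma PhiW_single (i : Fin (d+1)) (s : MvPolynomial (Fin (d+1) ⊕ W) k) :
    PhiW k d W (Pi.single i s) = Gg k d W s * tv k d W ^ (i : ℕ) := by
  rw [PhiW, Finset.sum_eq_single i]
  · rw [Pi.single_eq_same]
  · intro b _ hb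
    rw [Pi.single_eq_of_ne hb, map_zero, zero_mul]
  · intro h; exact absurd (Finset.mem_univ i) h

lemma PhiW_gsmul (s : MvPolynomial (Fin (d+1) ⊕ W) k) (g) :
    PhiW k d W (fun j => s * g j) = Gg k d W s * PhiW k d W g := by
  rw [PhiW, PhiW, Finset.mul_sum]
  refine Finset.sum_congr rfl fun i _ => ?_
  rw [map_mul]; ring

lemma one_mem : (1 : MvPolynomial (Fin d ⊕ (Unit ⊕ W)) k) ∈ Set.range (PhiW k d W) := by
  refine ⟨Pi.single 0 1, ?_⟩
  rw [PhiW_single]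
  simp

lemma tv_pow_top : tv k d W ^ (d+1) = PhiW k d W (fun i => -(X (Sum.inl i))) := by
  rw [PhiW]
  have : ∀ i : Fin (d+1), Gg k d W (-(X (Sum.inl i))) * tv k d W ^ (i:ℕ)
      = -(Gg k d W (X (Sum.inl i)) * tv k d W ^ (i:ℕ)) := by
    intro i; rw [map_neg, neg_mul]
  rw [Finset.sum_congr rfl (fun i _ => this i), Finset.sum_neg_distrib, key0]
  ring

lemma tv_mul_mem {x} (hx : x ∈ Set.range (PhiW k d W)) :
    tv k d W * x ∈ Set.range (PhiW k d W) := by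
  obtain ⟨g, rfl⟩ := hx
  set g' : Fin (d+1) → MvPolynomial (Fin (d+1) ⊕ W) k :=
    fun i => if h : (i:ℕ) = 0 then 0 else g ⟨(i:ℕ)-1, by omega⟩ with hg'def
  have hg' : PhiW k d W g' = ∑ i : Fin d, Gg k d W (g i.castSucc) * tv k d W ^ ((i:ℕ)+1) := by
    rw [PhiW, Fin.sum_univ_succ]
    have h0 : g' 0 = 0 := by rw [hg'def]; simp
    rw [h0, map_zero, zero_mul, zero_add]
    refine Finset.sum_congr rfl fun i _ => ?_
    have h1 : ((i.succ : Fin (d+1)) : ℕ) = (i:ℕ) + 1 := rfl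
    have h2 : g' i.succ = g i.castSucc := by
      rw [hg'def]
      simp only [h1]
      rw [dif_neg (by omega)]
      congr 1
    rw [h2, h1]
  have key : tv k d W * PhiW k d W g
      = PhiW k d W g' + Gg k d W (g (Fin.last d)) * tv k d W ^ (d+1) := by
    rw [PhiW, Finset.mul_sum]
    have : ∀ i : Fin (d+1), tv k d W * (Gg k d W (g i) * tv k d W ^ (i:ℕ))
        = Gg k d W (g i) * tv k d W ^ ((i:ℕ)+1) := by
      intro i; rw [pow_succ]; ring
    rw [Finset.sum_congr rfl (fun i _ => this i)]
    rw [Fin.sum_univ_castSucc (fun i : Fin (d+1) => Gg k d W (g i) * tv k d W ^ ((i:ℕ)+1))]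
    rw [hg']
    rfl
  rw [key, tv_pow_top, ← PhiW_gsmul, ← PhiW_add]
  exact ⟨_, rfl⟩

lemma gg_mul_mem (s) {x} (hx : x ∈ Set.range (PhiW k d W)) :
    Gg k d W s * x ∈ Set.range (PhiW k d W) := by
  obtain ⟨g, rfl⟩ := hx
  exact ⟨_, PhiW_gsmul k d W s g⟩

lemma add_mem' {x y} (hx : x ∈ Set.range (PhiW k d W)) (hy : y ∈ Set.range (PhiW k d W)) :
    x + y ∈ Set.range (PhiW k d W) := by
  obtain ⟨g, rfl⟩ := hx; obtain ⟨g', rfl⟩ := hy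
  exact ⟨_, PhiW_add k d W g g'⟩

lemma tv_pow_mul_mem (n : ℕ) {x} (hx : x ∈ Set.range (PhiW k d W)) :
    tv k d W ^ n * x ∈ Set.range (PhiW k d W) := by
  induction n with
  | zero => simpa using hx
  | succ n ih =>
    have := tv_mul_mem k d W ih
    rw [← mul_assoc, ← pow_succ'] at this
    exact this

lemma sum_mem' {α : Type} (t : Finset α) (f : α → MvPolynomial (Fin d ⊕ (Unit ⊕ W)) k)
    (h : ∀ a ∈ t, f a ∈ Set.range (PhiW k d W)) :
    (∑ a ∈ t, f a) ∈ Set.range (PhiW k d W) := by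
  classical
  induction t using Finset.induction_on with
  | empty => exact ⟨0, by simp [PhiW]⟩
  | insert _ _ hnot ih =>
    rw [Finset.sum_insert hnot]
    exact add_mem' k d W (h _ (Finset.mem_insert_self _ _))
      (ih fun a ha => h a (Finset.mem_insert_of_mem ha))

lemma mul_mem' {x y} (hx : x ∈ Set.range (PhiW k d W)) (hy : y ∈ Set.range (PhiW k d W)) :
    x * y ∈ Set.range (PhiW k d W) := by
  obtain ⟨g, rfl⟩ := hx
  rw [PhiW, Finset.sum_mul]
  refine sum_mem' k d W _ _ fun i _ => ?_
  rw [mul_assoc]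
  exact gg_mul_mem k d W _ (tv_pow_mul_mem k d W _ hy)

lemma vR_rec (m : ℕ) (hm : m ≤ d) :
    vR k d W m = Gg k d W (X (Sum.inl (⟨m, by omega⟩ : Fin (d+1))))
      + tv k d W * vR k d W (m+1) := by
  rw [Gg_Xinl]
  have : ((⟨m, by omega⟩ : Fin (d+1)) : ℕ) = m := rfl
  rw [this, sub_add_cancel]

lemma zero_mem : (0 : MvPolynomial (Fin d ⊕ (Unit ⊕ W)) k) ∈ Set.range (PhiW k d W) :=
  ⟨0, by simp [PhiW]⟩

lemma vR_mem_aux (j : ℕ) : vR k d W (d+1-j) ∈ Set.range (PhiW k d W) := by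
  induction j with
  | zero => rw [Nat.sub_zero, vR_succ_top]; exact one_mem k d W
  | succ j ih =>
    rcases Nat.lt_or_ge j (d+1) with h | h
    · have hle : d + 1 - (j+1) ≤ d := by omega
      rw [vR_rec k d W _ hle]
      have hstep : d + 1 - (j+1) + 1 = d + 1 - j := by omega
      rw [hstep]
      refine add_mem' k d W ?_ (tv_mul_mem k d W ih)
      have := gg_mul_mem k d W (X (Sum.inl (⟨d+1-(j+1), by omega⟩ : Fin (d+1))))
        (one_mem k d W)
      rwa [mul_one] at this
    · have : d + 1 - (j+1) = 0 := by omega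
      rw [this, vR_zero]
      exact zero_mem k d W

lemma vR_mem (m : ℕ) : vR k d W m ∈ Set.range (PhiW k d W) := by
  rcases le_or_gt m (d+1) with h | h
  · have : m = d + 1 - (d + 1 - m) := by omega
    rw [this]
    exact vR_mem_aux k d W _
  · have : vR k d W m = 0 := by rw [vR, dif_neg (by omega), if_neg (by omega)]
    rw [this]; exact zero_mem k d W

lemma PhiW_surjective : Function.Surjective (PhiW k d W) := by
  intro x
  have : x ∈ Set.range (PhiW k d W) := by
    induction x using MvPolynomial.induction_on with
    | C a =>
      have : (C a : MvPolynomial (Fin d ⊕ (Unit ⊕ W)) k) = Gg k d W (C a) * 1 := by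
        rw [show (C a : MvPolynomial (Fin (d+1) ⊕ W) k) = algebraMap k _ a from rfl,
          AlgHom.commutes, mul_one]
        rfl
      rw [this]
      exact gg_mul_mem k d W _ (one_mem k d W)
    | add p q hp hq => exact add_mem' k d W hp hq
    | mul_X p v hp =>
      refine mul_mem' k d W hp ?_
      match v with
      | Sum.inl q =>
        have : (X (Sum.inl q) : MvPolynomial (Fin d ⊕ (Unit ⊕ W)) k) = vR k d W ((q:ℕ)+1) := by
          rw [vR, dif_pos ⟨by omega, by omega⟩]
          congr 1
        rw [this]
        exact vR_mem k d W _
      | Sum.inr (Sum.inl ()) =>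
        have : (X (Sum.inr (Sum.inl ())) : MvPolynomial (Fin d ⊕ (Unit ⊕ W)) k)
            = tv k d W * 1 := by rw [mul_one]; rfl
        rw [this]
        exact tv_mul_mem k d W (one_mem k d W)
      | Sum.inr (Sum.inr w) =>
        have : (X (Sum.inr (Sum.inr w)) : MvPolynomial (Fin d ⊕ (Unit ⊕ W)) k)
            = Gg k d W (X (Sum.inr w)) * 1 := by rw [mul_one, Gg_Xinr]
        rw [this]
        exact gg_mul_mem k d W _ (one_mem k d W)
  exact this

lemma PhiW_bijective : Function.Bijective (PhiW k d W) :=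
  ⟨PhiW_injective k d W, PhiW_surjective k d W⟩

end St9

namespace St9
variable (k : Type) [Field k] (d : ℕ)

noncomputable def cp : MvPolynomial (CVar d) k := X (Sum.inl (Sum.inr ()))
noncomputable def cpp : MvPolynomial (CVar d) k := X (Sum.inr (Sum.inr ()))

noncomputable def aCm (m : ℕ) : MvPolynomial (CVar d) k :=
  if h : 1 ≤ m ∧ m ≤ d then X (Sum.inl (Sum.inl (⟨m - 1, by omega⟩ : Fin d)))
  else if m = d + 1 then 1 else 0

noncomputable def Fc : MvPolynomial (AVar d) k →ₐ[k] MvPolynomial (CVar d) k :=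
  ((f3 k d).comp (f2 k d)).comp (f1 k d)

lemma f1_Xinl (p : Fin (d+1)) :
    f1 k d (X (Sum.inl p)) = aRm k d p - X (Sum.inr (Sum.inl ())) * aRm k d ((p:ℕ)+1) := by
  simp [f1]

lemma f1_Xinr (q : Fin (d+1)) :
    f1 k d (X (Sum.inr q)) = X (Sum.inr (Sum.inr q)) := by simp [f1]

lemma f2_Xinl (p : Fin d) : f2 k d (X (Sum.inl p)) = X (Sum.inl p) := by simp [f2]

lemma f2_Xc : f2 k d (X (Sum.inr (Sum.inl ()))) = X (Sum.inr (Sum.inl ())) := by simp [f2]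

lemma f2_Xinr (q : Fin (d+1)) :
    f2 k d (X (Sum.inr (Sum.inr q)))
      = X (Sum.inr (Sum.inr q)) + (if (q:ℕ) = d then X (Sum.inr (Sum.inl ())) else 0) := by
  by_cases h : (q:ℕ) = d <;> simp [f2, h]

lemma f3_Xinl (p : Fin d) : f3 k d (X (Sum.inl p)) = X (Sum.inl (Sum.inl p)) := by simp [f3]

lemma f3_Xc : f3 k d (X (Sum.inr (Sum.inl ()))) = cp k d := by simp only [f3, aeval_X]; rw [cp]

lemma f3_Xinr (q : Fin (d+1)) :
    f3 k d (X (Sum.inr (Sum.inr q))) = bCm k d q - cpp k d * bCm k d ((q:ℕ)+1) := by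
  simp only [f3, aeval_X]; rw [cpp]

lemma f2_aRm (m : ℕ) : f2 k d (aRm k d m) = aRm k d m := by
  rw [aRm]
  split_ifs with h h2
  · exact f2_Xinl k d _
  · exact map_one _
  · exact map_zero _

lemma f3_aRm (m : ℕ) : f3 k d (aRm k d m) = aCm k d m := by
  rw [aRm, aCm]
  split_ifs with h h2
  · exact f3_Xinl k d _
  · exact map_one _
  · exact map_zero _

lemma Fc_Xinl (p : Fin (d+1)) :
    Fc k d (X (Sum.inl p)) = aCm k d p - cp k d * aCm k d ((p:ℕ)+1) := by
  rw [Fc, AlgHom.comp_apply, AlgHom.comp_apply, f1_Xinl, map_sub, map_mul, f2_Xc,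
    f2_aRm, f2_aRm, map_sub, map_mul, f3_Xc, f3_aRm, f3_aRm]

lemma Fc_Xinr (q : Fin (d+1)) :
    Fc k d (X (Sum.inr q)) = bCm k d q - cpp k d * bCm k d ((q:ℕ)+1)
      + (if (q:ℕ) = d then cp k d else 0) := by
  rw [Fc, AlgHom.comp_apply, AlgHom.comp_apply, f1_Xinr, f2_Xinr, map_add, f3_Xinr]
  congr 1
  by_cases h : (q:ℕ) = d <;> simp [h, f3_Xc]

lemma aCm_zero : aCm k d 0 = 0 := by simp [aCm]
lemma aCm_top : aCm k d (d+1) = 1 := by simp [aCm]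
lemma bCm_zero : bCm k d 0 = 0 := by simp [bCm]
lemma bCm_top : bCm k d (d+1) = 1 := by simp [bCm]

lemma TA : ∑ s : Fin (d+1), Fc k d (X (Sum.inl s)) * cp k d ^ (s:ℕ) = - cp k d ^ (d+1) := by
  have : ∀ s : Fin (d+1), Fc k d (X (Sum.inl s)) * cp k d ^ (s:ℕ)
      = aCm k d s * cp k d ^ (s:ℕ) - aCm k d ((s:ℕ)+1) * cp k d ^ ((s:ℕ)+1) := by
    intro s; rw [Fc_Xinl]; ring
  rw [Finset.sum_congr rfl (fun s _ => this s)]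
  rw [Fin.sum_univ_eq_sum_range (fun m => aCm k d m * cp k d ^ m - aCm k d (m+1) * cp k d ^ (m+1))]
  rw [Finset.sum_range_sub' (fun m => aCm k d m * cp k d ^ m)]
  simp [aCm_zero, aCm_top]

lemma TB : ∑ s : Fin (d+1), Fc k d (X (Sum.inr s)) * cpp k d ^ (s:ℕ)
    = (cp k d - cpp k d) * cpp k d ^ d := by
  have : ∀ s : Fin (d+1), Fc k d (X (Sum.inr s)) * cpp k d ^ (s:ℕ)
      = (bCm k d s * cpp k d ^ (s:ℕ) - bCm k d ((s:ℕ)+1) * cpp k d ^ ((s:ℕ)+1))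
        + (if (s:ℕ) = d then cp k d else 0) * cpp k d ^ (s:ℕ) := by
    intro s; rw [Fc_Xinr]; ring
  rw [Finset.sum_congr rfl (fun s _ => this s), Finset.sum_add_distrib]
  rw [Fin.sum_univ_eq_sum_range (fun m => bCm k d m * cpp k d ^ m - bCm k d (m+1) * cpp k d ^ (m+1))]
  rw [Finset.sum_range_sub' (fun m => bCm k d m * cpp k d ^ m)]
  have h2 : ∑ s : Fin (d+1), (if (s:ℕ) = d then cp k d else 0) * cpp k d ^ (s:ℕ)
      = cp k d * cpp k d ^ d := by
    rw [Finset.sum_eq_single (Fin.last d)]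
    · simp [Fin.val_last]
    · intro b _ hb
      have : (b:ℕ) ≠ d := by
        intro h; exact hb (by ext; simp [h, Fin.val_last])
      simp [this]
    · intro h; exact absurd (Finset.mem_univ _) h
  rw [h2]
  simp only [bCm_zero, bCm_top, zero_mul, one_mul, pow_zero, zero_sub]
  ring

end St9

namespace St9
variable (k : Type) [Field k] (d : ℕ)

lemma f1_eq_Gg : f1 k d = Gg k d (Fin (d+1)) := by
  rw [f1, Gg]
  congr 1
  funext v
  match v with
  | Sum.inl p => rfl
  | Sum.inr q => rfl

lemma PhiW1_apply (g : Fin (d+1) → MvPolynomial (AVar d) k) :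
    PhiW k d (Fin (d+1)) g
      = ∑ i : Fin (d+1), f1 k d (g i) * X (Sum.inr (Sum.inl ())) ^ (i:ℕ) := by
  rw [PhiW, f1_eq_Gg]
  rfl

/-- source renaming for the second application of the general lemma. -/
def eSrc : (Fin (d+1) ⊕ (Fin d ⊕ Unit)) ≃ RVar d where
  toFun v := match v with
    | Sum.inl q => Sum.inr (Sum.inr q)
    | Sum.inr (Sum.inl p) => Sum.inl p
    | Sum.inr (Sum.inr ()) => Sum.inr (Sum.inl ())
  invFun v := match v with
    | Sum.inl p => Sum.inr (Sum.inl p)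
    | Sum.inr (Sum.inl ()) => Sum.inr (Sum.inr ())
    | Sum.inr (Sum.inr q) => Sum.inl q
  left_inv v := by rcases v with q | (p | ⟨⟩) <;> rfl
  right_inv v := by rcases v with p | (⟨⟩ | q) <;> rfl

/-- target renaming for the second application of the general lemma. -/
def eTgt : (Fin d ⊕ (Unit ⊕ (Fin d ⊕ Unit))) ≃ CVar d where
  toFun v := match v with
    | Sum.inl q => Sum.inr (Sum.inl q)
    | Sum.inr (Sum.inl ()) => Sum.inr (Sum.inr ())
    | Sum.inr (Sum.inr (Sum.inl p)) => Sum.inl (Sum.inl p)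
    | Sum.inr (Sum.inr (Sum.inr ())) => Sum.inl (Sum.inr ())
  invFun v := match v with
    | Sum.inl (Sum.inl p) => Sum.inr (Sum.inr (Sum.inl p))
    | Sum.inl (Sum.inr ()) => Sum.inr (Sum.inr (Sum.inr ()))
    | Sum.inr (Sum.inl q) => Sum.inl q
    | Sum.inr (Sum.inr ()) => Sum.inr (Sum.inl ())
  left_inv v := by rcases v with q | (⟨⟩ | (p | ⟨⟩)) <;> rfl
  right_inv v := by rcases v with (p | ⟨⟩) | (q | ⟨⟩) <;> rfl

lemma rename_eTgt_vR (m : ℕ) :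
    rename (eTgt d) (vR k d (Fin d ⊕ Unit) m) = bCm k d m := by
  rw [vR, bCm]
  split_ifs with h h2
  · rw [rename_X]; rfl
  · exact map_one _
  · exact map_zero _

lemma rename_eTgt_tv : rename (eTgt d) (tv k d (Fin d ⊕ Unit)) = cpp k d := by
  rw [tv, rename_X]; rfl

lemma key3 (s : MvPolynomial (Fin (d+1) ⊕ (Fin d ⊕ Unit)) k) :
    f3 k d (rename (eSrc d) s) = rename (eTgt d) (Gg k d (Fin d ⊕ Unit) s) := by
  have heq : (f3 k d).comp (rename (R := k) (eSrc d))
      = (rename (R := k) (eTgt d)).comp (Gg k d (Fin d ⊕ Unit)) := by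
    apply MvPolynomial.algHom_ext
    intro v
    simp only [AlgHom.comp_apply, rename_X]
    rcases v with q | (p | ⟨⟩)
    · show f3 k d (X (Sum.inr (Sum.inr q)))
        = rename (eTgt d) (Gg k d (Fin d ⊕ Unit) (X (Sum.inl q)))
      rw [f3_Xinr, Gg_Xinl, map_sub, map_mul, rename_eTgt_tv, rename_eTgt_vR, rename_eTgt_vR]
    · show f3 k d (X (Sum.inl p)) = rename (eTgt d) (Gg k d (Fin d ⊕ Unit) (X (Sum.inr (Sum.inl p))))
      rw [f3_Xinl, Gg_Xinr, rename_X]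
      rfl
    · show f3 k d (X (Sum.inr (Sum.inl ())))
        = rename (eTgt d) (Gg k d (Fin d ⊕ Unit) (X (Sum.inr (Sum.inr ()))))
      rw [f3_Xc, Gg_Xinr, rename_X]
      rfl
  exact congrFun (congrArg (fun (f : _ →ₐ[k] _) => (f : _ → _)) heq) s

noncomputable def Phi3 (h : Fin (d+1) → MvPolynomial (RVar d) k) : MvPolynomial (CVar d) k :=
  ∑ j : Fin (d+1), f3 k d (h j) * cpp k d ^ (j:ℕ)

lemma Phi3_eq (h : Fin (d+1) → MvPolynomial (RVar d) k) :
    Phi3 k d h = rename (eTgt d)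
      (PhiW k d (Fin d ⊕ Unit) (fun j => rename (eSrc d).symm (h j))) := by
  rw [Phi3, PhiW, map_sum]
  refine Finset.sum_congr rfl fun j _ => ?_
  rw [map_mul, map_pow, rename_eTgt_tv, ← key3, rename_rename]
  simp [Equiv.self_comp_symm]

lemma pi_bij {X Y J : Type} {e : X → Y} (he : Function.Bijective e) :
    Function.Bijective (fun (h : J → X) (j : J) => e (h j)) := by
  constructor
  · intro h1 h2 hh
    funext j
    exact he.1 (congrFun hh j)
  · intro h
    refine ⟨fun j => (he.2 (h j)).choose, ?_⟩
    funext j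
    exact (he.2 (h j)).choose_spec

lemma Phi3_bijective : Function.Bijective (Phi3 k d) := by
  have h1 : Function.Bijective (fun (h : Fin (d+1) → MvPolynomial (RVar d) k)
      (j : Fin (d+1)) => rename (R := k) (eSrc d).symm (h j)) :=
    pi_bij (renameEquiv k (eSrc d).symm).bijective
  have h2 := PhiW_bijective k d (Fin d ⊕ Unit)
  have h3 := (renameEquiv k (eTgt d)).bijective
  have : Phi3 k d = (rename (R := k) (eTgt d)) ∘ (PhiW k d (Fin d ⊕ Unit))
      ∘ (fun h j => rename (R := k) (eSrc d).symm (h j)) := by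
    funext h
    exact Phi3_eq k d h
  rw [this]
  exact h3.comp (h2.comp h1)

/-- inverse of `f2`. -/
noncomputable def f2inv : MvPolynomial (RVar d) k →ₐ[k] MvPolynomial (RVar d) k :=
  aeval (fun v => match v with
    | Sum.inr (Sum.inr q) =>
        if (q : ℕ) = d then X (Sum.inr (Sum.inr q)) - X (Sum.inr (Sum.inl ()))
        else X (Sum.inr (Sum.inr q))
    | v => X v)

lemma f2_bijective : Function.Bijective (f2 k d) := by
  have h1 : (f2 k d).comp (f2inv k d) = AlgHom.id k _ := by
    apply MvPolynomial.algHom_ext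
    intro v
    rcases v with p | (⟨⟩ | q)
    · simp [f2, f2inv]
    · simp [f2, f2inv]
    · by_cases h : (q : ℕ) = d <;> simp [f2, f2inv, h]
  have h2 : (f2inv k d).comp (f2 k d) = AlgHom.id k _ := by
    apply MvPolynomial.algHom_ext
    intro v
    rcases v with p | (⟨⟩ | q)
    · simp [f2, f2inv]
    · simp [f2, f2inv]
    · by_cases h : (q : ℕ) = d <;> simp [f2, f2inv, h]
  constructor
  · intro x y hxy
    have := congrArg (f2inv k d) hxy
    rwa [show ∀ z, f2inv k d (f2 k d z) = z from
      fun z => congrFun (congrArg (fun (f : _ →ₐ[k] _) => (f : _ → _)) h2) z,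
      show ∀ z, f2inv k d (f2 k d z) = z from
      fun z => congrFun (congrArg (fun (f : _ →ₐ[k] _) => (f : _ → _)) h2) z] at this
  · intro y
    exact ⟨f2inv k d y, congrFun (congrArg (fun (f : _ →ₐ[k] _) => (f : _ → _)) h1) y⟩

noncomputable def PhiC (g : Fin (d + 1) × Fin (d + 1) → MvPolynomial (AVar d) k) :
    MvPolynomial (CVar d) k :=
  ∑ p : Fin (d + 1) × Fin (d + 1), Fc k d (g p) * (cp k d ^ (p.1:ℕ) * cpp k d ^ (p.2:ℕ))

lemma PhiC_eq (g : Fin (d + 1) × Fin (d + 1) → MvPolynomial (AVar d) k) :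
    PhiC k d g = Phi3 k d (fun j => f2 k d (PhiW k d (Fin (d+1)) (fun i => g (i, j)))) := by
  rw [PhiC, Phi3]
  have inner : ∀ j : Fin (d+1),
      f3 k d (f2 k d (PhiW k d (Fin (d+1)) (fun i => g (i, j)))) * cpp k d ^ (j:ℕ)
      = ∑ i : Fin (d+1), Fc k d (g (i, j)) * (cp k d ^ (i:ℕ) * cpp k d ^ (j:ℕ)) := by
    intro j
    rw [PhiW1_apply, map_sum, map_sum, Finset.sum_mul]
    refine Finset.sum_congr rfl fun i _ => ?_
    rw [map_mul, map_mul, map_pow, map_pow, f2_Xc, f3_Xc]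
    rw [show f3 k d (f2 k d (f1 k d (g (i, j)))) = Fc k d (g (i, j)) from rfl]
    ring
  rw [Finset.sum_congr rfl (fun j _ => inner j)]
  rw [Fintype.sum_prod_type]
  exact Finset.sum_comm

lemma PhiC_bijective : Function.Bijective (PhiC k d) := by
  have h1 : Function.Bijective (fun (g : Fin (d + 1) × Fin (d + 1) → MvPolynomial (AVar d) k)
      (j : Fin (d+1)) (i : Fin (d+1)) => g (i, j)) := by
    constructor
    · intro g1 g2 h
      funext p
      have hp := congrFun (congrFun h p.2) p.1
      exact hp
    · intro h
      exact ⟨fun p => h p.2 p.1, rfl⟩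
  have h2 : Function.Bijective (fun (h : Fin (d+1) → (Fin (d+1) → MvPolynomial (AVar d) k))
      (j : Fin (d+1)) => f2 k d (PhiW k d (Fin (d+1)) (h j))) :=
    pi_bij ((f2_bijective k d).comp (PhiW_bijective k d (Fin (d+1))))
  have h3 := Phi3_bijective k d
  have : PhiC k d = (Phi3 k d)
      ∘ (fun (h : Fin (d+1) → (Fin (d+1) → MvPolynomial (AVar d) k))
          (j : Fin (d+1)) => f2 k d (PhiW k d (Fin (d+1)) (h j)))
      ∘ (fun g (j : Fin (d+1)) (i : Fin (d+1)) => g (i, j)) := by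
    funext g
    exact PhiC_eq k d g
  rw [this]
  exact h3.comp (h2.comp h1)

end St9

namespace St9
variable (k : Type) [Field k] (d : ℕ)

lemma PhiC_add' (g g' : Fin (d + 1) × Fin (d + 1) → MvPolynomial (AVar d) k) :
    PhiC k d (g + g') = PhiC k d g + PhiC k d g' := by
  rw [PhiC, PhiC, PhiC, ← Finset.sum_add_distrib]
  exact Finset.sum_congr rfl fun p _ => by rw [Pi.add_apply, map_add, add_mul]

lemma PhiC_neg' (g : Fin (d + 1) × Fin (d + 1) → MvPolynomial (AVar d) k) :
    PhiC k d (-g) = - PhiC k d g := by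
  rw [PhiC, PhiC, ← Finset.sum_neg_distrib]
  exact Finset.sum_congr rfl fun p _ => by rw [Pi.neg_apply, map_neg, neg_mul]

lemma PhiC_smul' (x : MvPolynomial (AVar d) k) (g) :
    PhiC k d (x • g) = Fc k d x * PhiC k d g := by
  rw [PhiC, PhiC, Finset.mul_sum]
  refine Finset.sum_congr rfl fun p _ => ?_
  rw [Pi.smul_apply, smul_eq_mul, map_mul]
  ring

lemma PhiC_sum' {α : Type} (t : Finset α)
    (F : α → (Fin (d + 1) × Fin (d + 1) → MvPolynomial (AVar d) k)) :
    PhiC k d (∑ a ∈ t, F a) = ∑ a ∈ t, PhiC k d (F a) := by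
  classical
  induction t using Finset.induction_on with
  | empty => simp [PhiC]
  | insert _ _ hnot ih =>
    rw [Finset.sum_insert hnot, Finset.sum_insert hnot, PhiC_add', ih]

lemma PhiC_sub' (g g' : Fin (d + 1) × Fin (d + 1) → MvPolynomial (AVar d) k) :
    PhiC k d (g - g') = PhiC k d g - PhiC k d g' := by
  rw [sub_eq_add_neg, PhiC_add', PhiC_neg', sub_eq_add_neg]

lemma PhiC_fbas (q : Fin (d + 1) × Fin (d + 1)) :
    PhiC k d (fbas k d q) = cp k d ^ (q.1:ℕ) * cpp k d ^ (q.2:ℕ) := by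
  rw [PhiC, fbas, Finset.sum_eq_single q]
  · rw [Pi.single_eq_same, map_one, one_mul]
  · intro b _ hb
    rw [Pi.single_eq_of_ne hb, map_zero, zero_mul]
  · intro h; exact absurd (Finset.mem_univ q) h

lemma PhiC_d1row (p : Fin (d + 1) × Fin (d + 1)) :
    PhiC k d (d1row k d p)
      = (cp k d - cpp k d) * (cp k d ^ (p.1:ℕ) * cpp k d ^ (p.2:ℕ)) := by
  rw [d1row]
  split_ifs with hj hi
  · rw [PhiC_sum']
    have : ∀ s : Fin (d+1),
        PhiC k d ((X (Sum.inr s) : MvPolynomial (AVar d) k) • fbas k d (p.1, s))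
        = cp k d ^ (p.1:ℕ) * (Fc k d (X (Sum.inr s)) * cpp k d ^ (s:ℕ)) := by
      intro s
      rw [PhiC_smul', PhiC_fbas]
      ring
    rw [Finset.sum_congr rfl (fun s _ => this s), ← Finset.mul_sum, TB, hj]
    ring
  · rw [PhiC_neg', PhiC_add', PhiC_sum', PhiC_fbas]
    have : ∀ s : Fin (d+1),
        PhiC k d ((X (Sum.inl s) : MvPolynomial (AVar d) k) • fbas k d (s, p.2))
        = (Fc k d (X (Sum.inl s)) * cp k d ^ (s:ℕ)) * cpp k d ^ ((p.2):ℕ) := by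
      intro s
      rw [PhiC_smul', PhiC_fbas]
      ring
    rw [Finset.sum_congr rfl (fun s _ => this s), ← Finset.sum_mul, TA, hi]
    have hv : ((⟨(p.2:ℕ)+1, by have := p.2.isLt; omega⟩ : Fin (d+1)) : ℕ) = (p.2:ℕ)+1 := rfl
    rw [hv, pow_succ, pow_succ]
    ring
  · rw [PhiC_sub', PhiC_fbas, PhiC_fbas]
    have hv1 : ((⟨(p.1:ℕ)+1, by have := p.1.isLt; omega⟩ : Fin (d+1)) : ℕ) = (p.1:ℕ)+1 := rfl
    have hv2 : ((⟨(p.2:ℕ)+1, by have := p.2.isLt; omega⟩ : Fin (d+1)) : ℕ) = (p.2:ℕ)+1 := rfl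
    rw [hv1, hv2, pow_succ, pow_succ]
    ring

lemma PhiC_D1 (g : Fin (d + 1) × Fin (d + 1) → MvPolynomial (AVar d) k) :
    PhiC k d (D1 k d g) = (cp k d - cpp k d) * PhiC k d g := by
  rw [D1, PhiC_sum']
  have : ∀ p : Fin (d + 1) × Fin (d + 1),
      PhiC k d (g p • d1row k d p)
      = (cp k d - cpp k d) * (Fc k d (g p) * (cp k d ^ (p.1:ℕ) * cpp k d ^ (p.2:ℕ))) := by
    intro p
    rw [PhiC_smul', PhiC_d1row]
    ring
  rw [Finset.sum_congr rfl (fun p _ => this p), ← Finset.mul_sum, PhiC]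

lemma f4_aCm (m : ℕ) : f4 k d (aCm k d m) = aBm k d m := by
  rw [aCm, aBm]
  split_ifs with h h2
  · simp [f4]
  · exact map_one _
  · exact map_zero _

lemma f4_bCm (m : ℕ) (hm : m ≤ d) : f4 k d (bCm k d m) = bBm k d m := by
  rw [bCm, bBm]
  rcases Nat.eq_zero_or_pos m with h0 | h1
  · rw [dif_neg (by omega), dif_neg (by omega), if_neg (by omega)]
    exact map_zero _
  · rw [dif_pos ⟨h1, hm⟩, dif_pos ⟨h1, hm⟩]
    simp [f4]

lemma bBm_top : bBm k d (d+1) = 0 := by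
  rw [bBm, dif_neg (by omega)]

lemma f4_cp : f4 k d (cp k d) = X (Sum.inr ()) := by simp [f4, cp]
lemma f4_cpp : f4 k d (cpp k d) = X (Sum.inr ()) := by simp [f4, cpp]

lemma f4_Fc (x : MvPolynomial (AVar d) k) : f4 k d (Fc k d x) = fmap k d x := by
  have heq : (f4 k d).comp (Fc k d) = fmap k d := by
    apply MvPolynomial.algHom_ext
    intro v
    rw [AlgHom.comp_apply]
    rcases v with p | q
    · rw [Fc_Xinl, map_sub, map_mul, f4_cp, f4_aCm, f4_aCm,
        show fmap k d (X (Sum.inl p)) = aBm k d p - X (Sum.inr ()) * aBm k d ((p:ℕ)+1) by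
          simp [fmap]]
    · rw [Fc_Xinr,
        show fmap k d (X (Sum.inr q)) = bBm k d q - X (Sum.inr ()) * bBm k d ((q:ℕ)+1) by
          simp [fmap]]
      by_cases hq : (q:ℕ) = d
      · rw [if_pos hq, map_add, map_sub, map_mul, f4_cp, f4_cpp, f4_bCm k d _ (by omega),
          hq, bCm_top, bBm_top, map_one]
        ring
      · rw [if_neg hq, add_zero, map_sub, map_mul, f4_cpp,
          f4_bCm k d _ (by omega), f4_bCm k d _ (by omega : (q:ℕ)+1 ≤ d)]
  exact congrFun (congrArg (fun (f : _ →ₐ[k] _) => (f : _ → _)) heq) x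

lemma D0_eq (g : Fin (d + 1) × Fin (d + 1) → MvPolynomial (AVar d) k) :
    D0 k d g = f4 k d (PhiC k d g) := by
  rw [D0, PhiC, map_sum]
  refine Finset.sum_congr rfl fun p _ => ?_
  rw [map_mul, map_mul, map_pow, map_pow, f4_cp, f4_cpp, f4_Fc, pow_add]

/-- section of `f4`. -/
noncomputable def s4 : MvPolynomial (BVar d) k →ₐ[k] MvPolynomial (CVar d) k :=
  aeval (fun v => match v with
    | Sum.inl (Sum.inl p) => X (Sum.inl (Sum.inl p))
    | Sum.inl (Sum.inr p) => X (Sum.inr (Sum.inl p))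
    | Sum.inr () => X (Sum.inl (Sum.inr ())))

lemma f4_s4 : (f4 k d).comp (s4 k d) = AlgHom.id k _ := by
  apply MvPolynomial.algHom_ext
  intro v
  rcases v with (p | p) | ⟨⟩ <;> simp [f4, s4]

lemma f4_surjective : Function.Surjective (f4 k d) := fun b =>
  ⟨s4 k d b, congrFun (congrArg (fun (f : _ →ₐ[k] _) => (f : _ → _)) (f4_s4 k d)) b⟩

lemma ker_f4 {h : MvPolynomial (CVar d) k} (hh : f4 k d h = 0) :
    ∃ u, h = (cp k d - cpp k d) * u := by
  set I : Ideal (MvPolynomial (CVar d) k) := Ideal.span {cp k d - cpp k d} with hI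
  have key : (Ideal.Quotient.mkₐ k I).comp ((s4 k d).comp (f4 k d))
      = Ideal.Quotient.mkₐ k I := by
    apply MvPolynomial.algHom_ext
    intro v
    rw [AlgHom.comp_apply, AlgHom.comp_apply]
    rcases v with (p | ⟨⟩) | (p | ⟨⟩)
    · rw [show f4 k d (X (Sum.inl (Sum.inl p))) = X (Sum.inl (Sum.inl p)) by simp [f4],
        show s4 k d (X (Sum.inl (Sum.inl p))) = X (Sum.inl (Sum.inl p)) by simp [s4]]
    · rw [show f4 k d (X (Sum.inl (Sum.inr ()))) = X (Sum.inr ()) by simp [f4],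
        show s4 k d (X (Sum.inr ())) = X (Sum.inl (Sum.inr ())) by simp [s4]]
    · rw [show f4 k d (X (Sum.inr (Sum.inl p))) = X (Sum.inl (Sum.inr p)) by simp [f4],
        show s4 k d (X (Sum.inl (Sum.inr p))) = X (Sum.inr (Sum.inl p)) by simp [s4]]
    · rw [show f4 k d (X (Sum.inr (Sum.inr ()))) = X (Sum.inr ()) by simp [f4],
        show s4 k d (X (Sum.inr ())) = X (Sum.inl (Sum.inr ())) by simp [s4]]
      rw [show ((Ideal.Quotient.mkₐ k I) (X (Sum.inl (Sum.inr ()))) :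
          MvPolynomial (CVar d) k ⧸ I) = Ideal.Quotient.mk I (X (Sum.inl (Sum.inr ()))) from rfl,
        show ((Ideal.Quotient.mkₐ k I) (X (Sum.inr (Sum.inr ()))) :
          MvPolynomial (CVar d) k ⧸ I) = Ideal.Quotient.mk I (X (Sum.inr (Sum.inr ()))) from rfl,
        Ideal.Quotient.eq]
      rw [show (X (Sum.inl (Sum.inr ())) : MvPolynomial (CVar d) k)
        - X (Sum.inr (Sum.inr ())) = cp k d - cpp k d from rfl]
      exact Ideal.mem_span_singleton_self _
  have hmk : Ideal.Quotient.mkₐ k I h = 0 := by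
    have := DFunLike.congr_fun key h
    rw [AlgHom.comp_apply, AlgHom.comp_apply, hh, map_zero, map_zero] at this
    exact this.symm
  rw [Ideal.Quotient.mkₐ_eq_mk, Ideal.Quotient.eq_zero_iff_mem, hI,
    Ideal.mem_span_singleton] at hmk
  obtain ⟨u, hu⟩ := hmk
  exact ⟨u, hu⟩

lemma cp_sub_cpp_ne : (cp k d - cpp k d : MvPolynomial (CVar d) k) ≠ 0 := by
  have : cp k d ≠ cpp k d := by
    intro hcon
    have := congrArg (eval (fun v : CVar d =>
      if v = Sum.inl (Sum.inr ()) then (1 : k) else 0)) hcon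
    simp [cp, cpp] at this
  exact sub_ne_zero.mpr this

end St9

/-- the sequence `0 → L_1 → L_0 → B_d → 0` is exact:
`d_1` is injective, `d_0` is surjective, and `ker d_0 = im d_1`. -/
theorem statement9 (k : Type) [Field k] (d : ℕ) :
    Function.Injective (D1 k d) ∧
    Function.Surjective (D0 k d) ∧
    ∀ g : Fin (d + 1) × Fin (d + 1) → MvPolynomial (AVar d) k,
      D0 k d g = 0 ↔ g ∈ Set.range (D1 k d) := by
  have hbij := St9.PhiC_bijective k d
  have hne := St9.cp_sub_cpp_ne k d
  refine ⟨?_, ?_, ?_⟩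
  · intro g1 g2 h
    have h2 : (St9.cp k d - St9.cpp k d) * St9.PhiC k d g1
        = (St9.cp k d - St9.cpp k d) * St9.PhiC k d g2 := by
      rw [← St9.PhiC_D1, ← St9.PhiC_D1, h]
    exact hbij.1 (mul_left_cancel₀ hne h2)
  · intro b
    obtain ⟨c0, hc0⟩ := St9.f4_surjective k d b
    obtain ⟨g, hg⟩ := hbij.2 c0
    exact ⟨g, by rw [St9.D0_eq, hg, hc0]⟩
  · intro g
    constructor
    · intro h0
      rw [St9.D0_eq] at h0
      obtain ⟨u, hu⟩ := St9.ker_f4 k d h0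
      obtain ⟨g', hg'⟩ := hbij.2 u
      refine ⟨g', ?_⟩
      apply hbij.1
      rw [St9.PhiC_D1, hg', ← hu]
    · rintro ⟨g', rfl⟩
      rw [St9.D0_eq, St9.PhiC_D1, map_mul,
        show f4 k d (St9.cp k d - St9.cpp k d) = 0 by
          rw [map_sub, St9.f4_cp, St9.f4_cpp, sub_self],
        zero_mul]
end

section
/- Let k be a field and d ≥ 0. Regard B_d as an A_{d+1}-module via f. Then there exists an injective A_{d+1}-module homomorphism θ : A_{d+1}^{d+1} → A_{d+1}^{d+1} whose cokernel is isomorphic to B_d as an A_{d+1}-module; i.e., B_d admits a free resolution 0 → A_{d+1}^{d+1} → A_{d+1}^{d+1} → B_d → 0 by free modules of rank d+1. -/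
open MvPolynomial

/-- `B_d` as a module over `A_{d+1}` via `f`. -/
noncomputable instance moduleViaF (k : Type) [Field k] (d : ℕ) :
    Module (MvPolynomial (AVar d) k) (MvPolynomial (BVar d) k) :=
  Module.compHom _ (fmap k d).toRingHom


namespace S10

open Finset

variable (k : Type) [Field k] (d : ℕ)

/-- telescoping sum with a lower cutoff -/
lemma tele {M : Type*} [AddCommGroup M] (g : ℕ → M) (a : ℕ) :
    ∀ n, a ≤ n →
      ∑ j ∈ Finset.range n, (if a ≤ j then g j - g (j+1) else 0) = g a - g n := by
  intro n
  induction n with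
  | zero => intro h; interval_cases a; simp
  | succ n ih =>
    intro h
    rw [Finset.sum_range_succ]
    rcases Nat.lt_or_ge n a with h1 | h1
    · have ha : a = n + 1 := by omega
      rw [Finset.sum_eq_zero (fun j hj => by
        rw [if_neg]; simp only [Finset.mem_range] at hj; omega)]
      rw [if_neg (by omega), ha]; simp
    · rw [ih h1, if_pos h1]; abel

/-- splitting off the lowest term of a cutoff sum -/
lemma split_low {M : Type*} [AddCommGroup M] (F : ℕ → M) (i n : ℕ) (h : i < n) :
    ∑ j ∈ Finset.range n, (if i ≤ j then F j else 0)
      = F i + ∑ j ∈ Finset.range n, (if i+1 ≤ j then F j else 0) := by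
  have h1 : ∀ j ∈ Finset.range n, (if i ≤ j then F j else 0)
      = (if j = i then F j else 0) + (if i+1 ≤ j then F j else 0) := by
    intro j _
    rcases lt_trichotomy j i with hj | hj | hj
    · rw [if_neg (by omega), if_neg (by omega), if_neg (by omega)]; simp
    · rw [if_pos (by omega), if_pos hj, if_neg (by omega), hj]; simp
    · rw [if_pos (by omega), if_neg (by omega), if_pos (by omega)]; simp
  rw [Finset.sum_congr rfl h1, Finset.sum_add_distrib, Finset.sum_ite_eq' (Finset.range n) i F,
    if_pos (Finset.mem_range.mpr h)]

/-- `u_{m+1}`, the `a`-variable with `Fin`-index `m`, in `A`. -/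
noncomputable def uA (m : ℕ) : MvPolynomial (AVar d) k :=
  if h : m < d + 1 then X (Sum.inl (⟨m, h⟩ : Fin (d+1))) else 0

/-- `v_{m+1}`, the `b`-variable with `Fin`-index `m`, in `A`. -/
noncomputable def vA (m : ℕ) : MvPolynomial (AVar d) k :=
  if h : m < d + 1 then X (Sum.inr (⟨m, h⟩ : Fin (d+1))) else 0

/-- `c'` in `R`. -/
noncomputable def cR : MvPolynomial (RVar d) k := X (Sum.inr (Sum.inl ()))

/-- the `b`-variable with `Fin`-index `m` in `R`. -/
noncomputable def bvR (m : ℕ) : MvPolynomial (RVar d) k :=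
  if h : m < d + 1 then X (Sum.inr (Sum.inr (⟨m, h⟩ : Fin (d+1)))) else 0

/-- The monic polynomial `P(Y) = Y^{d+1} + ∑ u_{i+1} Y^i` over `A`. -/
noncomputable def Pp : Polynomial (MvPolynomial (AVar d) k) :=
  Polynomial.X ^ (d+1) +
    ∑ i ∈ Finset.range (d+1), Polynomial.C (uA k d i) * Polynomial.X ^ i

lemma uA_fin (p : Fin (d+1)) : uA k d p = X (Sum.inl p) := by
  rw [uA, dif_pos p.isLt]

lemma vA_fin (p : Fin (d+1)) : vA k d p = X (Sum.inr p) := by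
  rw [vA, dif_pos p.isLt]

lemma bvR_fin (p : Fin (d+1)) : bvR k d p = X (Sum.inr (Sum.inr p)) := by
  rw [bvR, dif_pos p.isLt]

lemma aRm_zero : aRm k d 0 = 0 := by simp [aRm]

lemma aRm_last : aRm k d (d+1) = 1 := by
  rw [aRm, dif_neg (by omega), if_pos rfl]

lemma aRm_mid (m : ℕ) (h1 : 1 ≤ m) (h2 : m ≤ d) :
    aRm k d m = X (Sum.inl (⟨m - 1, by omega⟩ : Fin d)) := by
  rw [aRm, dif_pos ⟨h1, h2⟩]

lemma bBm_zero : bBm k d 0 = 0 := by simp [bBm]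

lemma bBm_big (m : ℕ) (h : d + 1 ≤ m) : bBm k d m = 0 := by
  rw [bBm, dif_neg (by omega)]

lemma f1_aX (p : Fin (d+1)) :
    f1 k d (X (Sum.inl p)) = aRm k d p - cR k d * aRm k d ((p:ℕ)+1) := by
  simp [f1, cR]

lemma f1_bX (t : Fin (d+1)) :
    f1 k d (X (Sum.inr t)) = X (Sum.inr (Sum.inr t)) := by
  simp [f1]

lemma f1_uA (m : ℕ) (h : m < d + 1) :
    f1 k d (uA k d m) = aRm k d m - cR k d * aRm k d (m+1) := by
  rw [uA, dif_pos h, f1_aX]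

lemma f1_vA (m : ℕ) (h : m < d + 1) :
    f1 k d (vA k d m) = bvR k d m := by
  rw [vA, dif_pos h, f1_bX, bvR, dif_pos h]

lemma Pp_sum_degree_lt :
    (∑ i ∈ Finset.range (d+1),
      Polynomial.C (uA k d i) * Polynomial.X ^ i).degree < ((d+1 : ℕ) : WithBot ℕ) := by
  apply lt_of_le_of_lt (Polynomial.degree_sum_le _ _)
  rw [Finset.sup_lt_iff (by exact_mod_cast WithBot.bot_lt_coe (d+1))]
  intro i hi
  apply lt_of_le_of_lt (Polynomial.degree_C_mul_X_pow_le _ _)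
  exact_mod_cast Finset.mem_range.mp hi

lemma Pp_monic : (Pp k d).Monic :=
  Polynomial.monic_X_pow_add (Pp_sum_degree_lt k d)

lemma Pp_natDegree : (Pp k d).natDegree = d + 1 := by
  have h : (Pp k d).degree = ((d+1 : ℕ) : WithBot ℕ) := by
    rw [Pp, Polynomial.degree_add_eq_left_of_degree_lt, Polynomial.degree_X_pow]
    rw [Polynomial.degree_X_pow]
    exact Pp_sum_degree_lt k d
  exact Polynomial.natDegree_eq_of_degree_eq_some h

/-- `P` evaluated via `f1` at `c'` is zero in `R`. -/
lemma hPc : Polynomial.eval₂ (f1 k d).toRingHom (cR k d) (Pp k d) = 0 := by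
  have h1 : ∀ i ∈ Finset.range (d+1),
      (f1 k d).toRingHom (uA k d i) * cR k d ^ i
        = (if 0 ≤ i then aRm k d i * cR k d ^ i - aRm k d (i+1) * cR k d ^ (i+1) else 0) := by
    intro i hi
    rw [if_pos (Nat.zero_le i)]
    show f1 k d (uA k d i) * cR k d ^ i = _
    rw [f1_uA k d i (Finset.mem_range.mp hi), pow_succ]
    ring
  rw [Pp]
  simp only [Polynomial.eval₂_add, Polynomial.eval₂_pow, Polynomial.eval₂_X,
    Polynomial.eval₂_finset_sum, Polynomial.eval₂_mul, Polynomial.eval₂_C]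
  rw [Finset.sum_congr rfl h1,
    tele (fun m => aRm k d m * cR k d ^ m) 0 (d+1) (Nat.zero_le _)]
  simp [aRm_zero, aRm_last]

/-- The map `Φ : T = A[Y]/(P) → R`. -/
noncomputable def Phi : AdjoinRoot (Pp k d) →+* MvPolynomial (RVar d) k :=
  AdjoinRoot.lift (f1 k d).toRingHom (cR k d) (hPc k d)

lemma Phi_of (a : MvPolynomial (AVar d) k) :
    Phi k d (AdjoinRoot.of (Pp k d) a) = f1 k d a := AdjoinRoot.lift_of _

lemma Phi_root : Phi k d (AdjoinRoot.root (Pp k d)) = cR k d := AdjoinRoot.lift_root _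

/-- `α_i ∈ T`, the element mapping to `a_i ∈ R` under `Φ`. -/
noncomputable def alf (i : ℕ) : AdjoinRoot (Pp k d) :=
  AdjoinRoot.root (Pp k d) ^ (d+1-i)
  + ∑ j ∈ Finset.range (d+1),
      if i ≤ j then AdjoinRoot.of (Pp k d) (uA k d j) * AdjoinRoot.root (Pp k d) ^ (j-i)
      else 0

lemma alf_zero : alf k d 0 = 0 := by
  have h := AdjoinRoot.eval₂_root (Pp k d)
  rw [Pp] at h
  simp only [Polynomial.eval₂_add, Polynomial.eval₂_pow, Polynomial.eval₂_X,
    Polynomial.eval₂_finset_sum, Polynomial.eval₂_mul, Polynomial.eval₂_C] at h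
  rw [alf]
  simp
  exact h

lemma alf_last : alf k d (d+1) = 1 := by
  rw [alf, Finset.sum_eq_zero (fun j hj => by
    rw [if_neg]; simp only [Finset.mem_range] at hj; omega)]
  simp

lemma alf_rec (i : ℕ) (h : i ≤ d) :
    alf k d i = AdjoinRoot.of (Pp k d) (uA k d i)
      + AdjoinRoot.root (Pp k d) * alf k d (i+1) := by
  rw [alf, alf, mul_add, Finset.mul_sum]
  have h2 : AdjoinRoot.root (Pp k d) * AdjoinRoot.root (Pp k d) ^ (d+1-(i+1))
      = AdjoinRoot.root (Pp k d) ^ (d+1-i) := by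
    rw [← pow_succ']
    congr 1
    omega
  rw [h2]
  have h3 : ∀ j ∈ Finset.range (d+1),
      (AdjoinRoot.root (Pp k d) *
        if i+1 ≤ j then AdjoinRoot.of (Pp k d) (uA k d j) * AdjoinRoot.root (Pp k d) ^ (j-(i+1))
        else 0)
      = (if i+1 ≤ j then AdjoinRoot.of (Pp k d) (uA k d j) * AdjoinRoot.root (Pp k d) ^ (j-i)
          else 0) := by
    intro j _
    split_ifs with hj
    · rw [show j - i = (j - (i+1)) + 1 by omega, pow_succ]
      ring
    · rw [mul_zero]
  rw [Finset.sum_congr rfl h3,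
    split_low (fun j => AdjoinRoot.of (Pp k d) (uA k d j) * AdjoinRoot.root (Pp k d) ^ (j-i))
      i (d+1) (by omega)]
  simp only [Nat.sub_self, pow_zero, mul_one]
  ring

lemma Phi_alf (i : ℕ) (h : i ≤ d + 1) : Phi k d (alf k d i) = aRm k d i := by
  rw [alf, map_add, map_pow, Phi_root, map_sum]
  have h1 : ∀ j ∈ Finset.range (d+1),
      Phi k d (if i ≤ j then AdjoinRoot.of (Pp k d) (uA k d j)
          * AdjoinRoot.root (Pp k d) ^ (j-i) else 0)
      = (if i ≤ j then aRm k d j * cR k d ^ (j-i) - aRm k d (j+1) * cR k d ^ (j+1-i) else 0) := by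
    intro j hj
    rw [apply_ite (Phi k d), map_zero, map_mul, map_pow, Phi_of, Phi_root,
      f1_uA k d j (Finset.mem_range.mp hj)]
    split_ifs with hij
    · rw [show j+1-i = (j-i)+1 by omega, pow_succ]
      ring
    · rfl
  rw [Finset.sum_congr rfl h1, tele (fun m => aRm k d m * cR k d ^ (m-i)) i (d+1) h,
    Nat.sub_self, pow_zero, mul_one, aRm_last, one_mul]
  ring

/-- The inverse map `Ξ : R → T`. -/
noncomputable def Xi : MvPolynomial (RVar d) k →+* AdjoinRoot (Pp k d) :=
  eval₂Hom ((AdjoinRoot.of (Pp k d)).comp (C : k →+* MvPolynomial (AVar d) k))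
    (fun v => match v with
      | Sum.inl p => alf k d ((p:ℕ)+1)
      | Sum.inr (Sum.inl _) => AdjoinRoot.root (Pp k d)
      | Sum.inr (Sum.inr t) => AdjoinRoot.of (Pp k d) (vA k d t))

lemma Xi_cR : Xi k d (cR k d) = AdjoinRoot.root (Pp k d) := by
  simp [Xi, cR]

lemma Xi_aRm (m : ℕ) (h : m ≤ d + 1) : Xi k d (aRm k d m) = alf k d m := by
  rcases Nat.eq_zero_or_pos m with hm | hm
  · subst hm; rw [aRm_zero, map_zero, alf_zero]
  rcases Nat.lt_or_ge m (d+1) with hm2 | hm2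
  · rw [aRm_mid k d m hm (by omega)]
    have : Xi k d (X (Sum.inl (⟨m - 1, by omega⟩ : Fin d)))
        = alf k d (((⟨m - 1, by omega⟩ : Fin d) : ℕ) + 1) := by
      simp [Xi]
    rw [this]
    congr 1
    simp
    omega
  · have : m = d + 1 := by omega
    subst this
    rw [aRm_last, map_one, alf_last]

lemma Xi_f1 (a : MvPolynomial (AVar d) k) :
    Xi k d (f1 k d a) = AdjoinRoot.of (Pp k d) a := by
  have : (Xi k d).comp (f1 k d).toRingHom = AdjoinRoot.of (Pp k d) := by
    apply MvPolynomial.ringHom_ext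
    · intro r
      show Xi k d (f1 k d (C r)) = AdjoinRoot.of (Pp k d) (C r)
      rw [show (C r : MvPolynomial (AVar d) k) = algebraMap k _ r from rfl, AlgHom.commutes]
      simp [Xi]
    · intro v
      show Xi k d (f1 k d (X v)) = AdjoinRoot.of (Pp k d) (X v)
      rcases v with p | t
      · rw [f1_aX, map_sub, map_mul, Xi_cR, Xi_aRm k d p (by omega),
          Xi_aRm k d ((p:ℕ)+1) (by omega)]
        have := alf_rec k d (p:ℕ) (by omega)
        rw [uA_fin] at this
        rw [this]; ring
      · rw [f1_bX]
        have : Xi k d (X (Sum.inr (Sum.inr t))) = AdjoinRoot.of (Pp k d) (vA k d t) := by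
          simp [Xi]
        rw [this, vA_fin]
  exact DFunLike.congr_fun this a

lemma Phi_Xi (x : MvPolynomial (RVar d) k) : Phi k d (Xi k d x) = x := by
  have : (Phi k d).comp (Xi k d) = RingHom.id _ := by
    apply MvPolynomial.ringHom_ext
    · intro r
      show Phi k d (Xi k d (C r)) = C r
      have : Xi k d (C r) = AdjoinRoot.of (Pp k d) (C r) := by simp [Xi]
      rw [this, Phi_of]
      rw [show (C r : MvPolynomial (AVar d) k) = algebraMap k _ r from rfl, AlgHom.commutes]
      rfl
    · intro v
      show Phi k d (Xi k d (X v)) = X v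
      rcases v with p | v
      · have : Xi k d (X (Sum.inl p)) = alf k d ((p:ℕ)+1) := by simp [Xi]
        rw [this, Phi_alf k d _ (by omega), aRm_mid k d _ (by omega) (by omega)]
        exact congrArg X (congrArg Sum.inl (Fin.ext (by simp)))
      · rcases v with u | t
        · cases u
          have : Xi k d (X (Sum.inr (Sum.inl ()))) = AdjoinRoot.root (Pp k d) := by simp [Xi]
          rw [this, Phi_root, cR]
        · have : Xi k d (X (Sum.inr (Sum.inr t))) = AdjoinRoot.of (Pp k d) (vA k d t) := by
            simp [Xi]
          rw [this, Phi_of, f1_vA k d t t.isLt, bvR_fin]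
  exact DFunLike.congr_fun this x

lemma Xi_Phi (x : AdjoinRoot (Pp k d)) : Xi k d (Phi k d x) = x := by
  induction x using AdjoinRoot.induction_on with
  | ih p =>
    have hmk : AdjoinRoot.mk (Pp k d) p
        = Polynomial.eval₂ (AdjoinRoot.of (Pp k d)) (AdjoinRoot.root (Pp k d)) p := by
      rw [← AdjoinRoot.aeval_eq, Polynomial.aeval_def, AdjoinRoot.algebraMap_eq]
    rw [hmk, Polynomial.hom_eval₂, Polynomial.hom_eval₂]
    have h1 : (Xi k d).comp ((Phi k d).comp (AdjoinRoot.of (Pp k d)))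
        = AdjoinRoot.of (Pp k d) := RingHom.ext (fun a => by
      rw [RingHom.comp_apply, RingHom.comp_apply, Phi_of, Xi_f1])
    have h2 : Xi k d (Phi k d (AdjoinRoot.root (Pp k d))) = AdjoinRoot.root (Pp k d) := by
      rw [Phi_root, Xi_cR]
    rw [h1, h2]

lemma Phi_inj : Function.Injective (Phi k d) :=
  Function.LeftInverse.injective (Xi_Phi k d)

lemma Phi_surj : Function.Surjective (Phi k d) :=
  fun r => ⟨Xi k d r, Phi_Xi k d r⟩


/-- `σ`-preimages of the `b`-variables: `sb m` maps to `b_m` under `ψ`. -/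
noncomputable def sb (m : ℕ) : MvPolynomial (RVar d) k :=
  ∑ t ∈ Finset.range (d+1), if m ≤ t then cR k d ^ (t - m) * bvR k d t else 0

/-- the element `q = ∑ b_{t+1} c'^t` of `R`. -/
noncomputable def qR : MvPolynomial (RVar d) k := sb k d 0

/-- the element of `T` corresponding to `q`. -/
noncomputable def qT : AdjoinRoot (Pp k d) :=
  ∑ t ∈ Finset.range (d+1), AdjoinRoot.of (Pp k d) (vA k d t) * AdjoinRoot.root (Pp k d) ^ t

lemma Phi_qT : Phi k d (qT k d) = qR k d := by
  rw [qT, map_sum, qR, sb]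
  apply Finset.sum_congr rfl
  intro t ht
  rw [map_mul, map_pow, Phi_of, Phi_root, f1_vA k d t (Finset.mem_range.mp ht),
    if_pos (Nat.zero_le t), Nat.sub_zero, mul_comm]

lemma sb_last : sb k d (d+1) = 0 := by
  rw [sb]
  apply Finset.sum_eq_zero
  intro t ht
  rw [if_neg]
  simp only [Finset.mem_range] at ht
  omega

lemma sb_rec (m : ℕ) (h : m ≤ d) :
    sb k d m = bvR k d m + cR k d * sb k d (m+1) := by
  rw [sb, sb, Finset.mul_sum]
  have h3 : ∀ t ∈ Finset.range (d+1),
      (cR k d * if m+1 ≤ t then cR k d ^ (t-(m+1)) * bvR k d t else 0)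
      = (if m+1 ≤ t then cR k d ^ (t-m) * bvR k d t else 0) := by
    intro t _
    split_ifs with hj
    · rw [show t - m = (t - (m+1)) + 1 by omega, pow_succ]
      ring
    · rw [mul_zero]
  rw [Finset.sum_congr rfl h3,
    split_low (fun t => cR k d ^ (t-m) * bvR k d t) m (d+1) (by omega)]
  rw [Nat.sub_self, pow_zero, one_mul]

lemma qR_ne : qR k d ≠ 0 := by
  intro hq
  have := congrArg (aeval (R := k) (fun v : RVar d => match v with
    | Sum.inr (Sum.inr t) => if (t : ℕ) = 0 then (1:k) else 0
    | _ => 0)) hq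
  rw [map_zero, qR, sb, map_sum] at this
  rw [Finset.sum_eq_single_of_mem 0 (Finset.mem_range.mpr (by omega))] at this
  · rw [if_pos (by omega), Nat.sub_zero, pow_zero, one_mul, bvR, dif_pos (by omega)] at this
    simp at this
  · intro t _ ht
    rw [if_pos (Nat.zero_le t), Nat.sub_zero, map_mul, map_pow]
    have hc : aeval (R := k) (fun v : RVar d => match v with
      | Sum.inr (Sum.inr t) => if (t : ℕ) = 0 then (1:k) else 0
      | _ => 0) (cR k d) = 0 := by simp [cR]
    rw [hc, zero_pow ht, zero_mul]

/-- `ψ : R → B`, with `ψ ∘ f1 = f`. -/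
noncomputable def psi : MvPolynomial (RVar d) k →ₐ[k] MvPolynomial (BVar d) k :=
  aeval (fun v => match v with
    | Sum.inl p => X (Sum.inl (Sum.inl p))
    | Sum.inr (Sum.inl _) => X (Sum.inr ())
    | Sum.inr (Sum.inr t) => bBm k d t - X (Sum.inr ()) * bBm k d ((t:ℕ)+1))

lemma psi_cR : psi k d (cR k d) = X (Sum.inr ()) := by simp [psi, cR]

lemma psi_bvR (m : ℕ) (h : m < d+1) :
    psi k d (bvR k d m) = bBm k d m - X (Sum.inr ()) * bBm k d (m+1) := by
  rw [bvR, dif_pos h]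
  simp [psi]

lemma psi_aRm (m : ℕ) : psi k d (aRm k d m) = aBm k d m := by
  rw [aRm, aBm]
  split_ifs with h h2 <;> simp [psi]

lemma psi_f1 (a : MvPolynomial (AVar d) k) : psi k d (f1 k d a) = fmap k d a := by
  have : (psi k d).comp (f1 k d) = fmap k d := by
    apply MvPolynomial.algHom_ext
    intro v
    show psi k d (f1 k d (X v)) = fmap k d (X v)
    rcases v with p | t
    · rw [f1_aX, map_sub, map_mul, psi_cR, psi_aRm, psi_aRm]
      simp [fmap]
    · rw [f1_bX]
      have : psi k d (X (Sum.inr (Sum.inr t)))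
          = bBm k d t - X (Sum.inr ()) * bBm k d ((t:ℕ)+1) := by simp [psi]
      rw [this]
      simp [fmap]
  exact DFunLike.congr_fun this a

lemma psi_sb (m : ℕ) (h : m ≤ d + 1) : psi k d (sb k d m) = bBm k d m := by
  rw [sb, map_sum]
  have h1 : ∀ t ∈ Finset.range (d+1),
      psi k d (if m ≤ t then cR k d ^ (t-m) * bvR k d t else 0)
      = (if m ≤ t then bBm k d t * X (Sum.inr ()) ^ (t-m)
          - bBm k d (t+1) * X (Sum.inr ()) ^ (t+1-m) else 0) := by
    intro t ht
    rw [apply_ite (psi k d), map_zero, map_mul, map_pow, psi_cR,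
      psi_bvR k d t (Finset.mem_range.mp ht)]
    split_ifs with hmt
    · rw [show t+1-m = (t-m)+1 by omega, pow_succ]
      ring
    · rfl
  rw [Finset.sum_congr rfl h1,
    tele (fun j => bBm k d j * X (Sum.inr ()) ^ (j-m)) m (d+1) h,
    Nat.sub_self, pow_zero, mul_one, bBm_big k d (d+1) (by omega), zero_mul, sub_zero]

lemma psi_qR : psi k d (qR k d) = 0 := by
  rw [qR, psi_sb k d 0 (by omega), bBm_zero]

/-- section `σ : B → R` of `ψ`. -/
noncomputable def sig : MvPolynomial (BVar d) k →ₐ[k] MvPolynomial (RVar d) k :=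
  aeval (fun v => match v with
    | Sum.inl (Sum.inl p) => X (Sum.inl p)
    | Sum.inl (Sum.inr p) => sb k d ((p:ℕ)+1)
    | Sum.inr _ => cR k d)

lemma sig_bBm (m : ℕ) :
    sig k d (bBm k d m) = if 1 ≤ m ∧ m ≤ d then sb k d m else 0 := by
  rw [bBm]
  split_ifs with h
  · have : sig k d (X (Sum.inl (Sum.inr (⟨m-1, by omega⟩ : Fin d))))
        = sb k d (((⟨m-1, by omega⟩ : Fin d) : ℕ) + 1) := by simp [sig]
    rw [this]
    congr 1
    simp
    omega
  · rw [map_zero]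

lemma sig_bBm' (m : ℕ) (h1 : 1 ≤ m) (h2 : m ≤ d + 1) :
    sig k d (bBm k d m) = sb k d m := by
  rw [sig_bBm]
  split_ifs with h
  · rfl
  · have : m = d + 1 := by omega
    rw [this, sb_last]

lemma psi_sig (b : MvPolynomial (BVar d) k) : psi k d (sig k d b) = b := by
  have : (psi k d).comp (sig k d) = AlgHom.id k _ := by
    apply MvPolynomial.algHom_ext
    intro v
    show psi k d (sig k d (X v)) = X v
    rcases v with v | u
    · rcases v with p | p
      · simp [sig, psi]
      · have : sig k d (X (Sum.inl (Sum.inr p))) = sb k d ((p:ℕ)+1) := by simp [sig]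
        rw [this, psi_sb k d _ (by omega), bBm, dif_pos ⟨by omega, by omega⟩]
        exact congrArg X (congrArg Sum.inl (congrArg Sum.inr (Fin.ext (by simp))))
    · cases u
      have : sig k d (X (Sum.inr ())) = cR k d := by simp [sig]
      rw [this, psi_cR]
  exact DFunLike.congr_fun this b

lemma psi_surj : Function.Surjective (psi k d) :=
  fun b => ⟨sig k d b, psi_sig k d b⟩

lemma psi_ker {x : MvPolynomial (RVar d) k} (hx : psi k d x = 0) :
    ∃ r, x = qR k d * r := by
  set I := Ideal.span {qR k d} with hI
  have hqI : Ideal.Quotient.mk I (qR k d) = 0 := by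
    rw [Ideal.Quotient.eq_zero_iff_mem, hI]
    exact Ideal.subset_span rfl
  have key : (Ideal.Quotient.mkₐ k I).comp ((sig k d).comp (psi k d))
      = Ideal.Quotient.mkₐ k I := by
    apply MvPolynomial.algHom_ext
    intro v
    show Ideal.Quotient.mk I (sig k d (psi k d (X v))) = Ideal.Quotient.mk I (X v)
    rcases v with p | v
    · simp [psi, sig]
    · rcases v with u | t
      · cases u
        simp [psi, sig, cR]
      · have hpsi : psi k d (X (Sum.inr (Sum.inr t)))
            = bBm k d t - X (Sum.inr ()) * bBm k d ((t:ℕ)+1) := by simp [psi]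
        have hsig2 : sig k d (X (Sum.inr ())) = cR k d := by simp [sig]
        rw [hpsi, map_sub, map_mul, hsig2, sig_bBm,
          sig_bBm' k d ((t:ℕ)+1) (by omega) (by omega)]
        rcases Nat.eq_zero_or_pos (t:ℕ) with hm | hm
        · rw [if_neg (by omega)]
          have hrec := sb_rec k d 0 (by omega)
          rw [← qR] at hrec
          have h0 : cR k d * sb k d ((t:ℕ)+1) = qR k d - bvR k d 0 := by
            rw [hm, hrec]; ring
          rw [zero_sub, h0]
          have : bvR k d 0 = X (Sum.inr (Sum.inr t)) := by
            rw [bvR, dif_pos (by omega)]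
            exact congrArg X (congrArg Sum.inr (congrArg Sum.inr (Fin.ext (by simp; omega))))
          rw [← this, neg_sub, map_sub, hqI, sub_zero]
        · rw [if_pos ⟨hm, t.is_le⟩]
          have hrec := sb_rec k d (t:ℕ) t.is_le
          have : sb k d (t:ℕ) - cR k d * sb k d ((t:ℕ)+1) = bvR k d (t:ℕ) := by
            rw [hrec]; ring
          rw [this, bvR, dif_pos t.isLt]
  have := DFunLike.congr_fun key x
  simp only [AlgHom.comp_apply, Ideal.Quotient.mkₐ_eq_mk, hx, map_zero] at this
  have hmem : x ∈ I := by
    rw [← Ideal.Quotient.eq_zero_iff_mem, ← this]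
  rw [hI] at hmem
  obtain ⟨a, ha⟩ := Ideal.mem_span_singleton'.mp hmem
  exact ⟨a, by rw [← ha, mul_comm]⟩


lemma Xi_qR : Xi k d (qR k d) = qT k d := by
  rw [← Phi_qT, Xi_Phi]

/-- `ψ ∘ Φ` as an `A`-linear map `T → B`. -/
noncomputable def FF :
    AdjoinRoot (Pp k d) →ₗ[MvPolynomial (AVar d) k] MvPolynomial (BVar d) k where
  toFun t := psi k d (Phi k d t)
  map_add' x y := by rw [map_add, map_add]
  map_smul' a t := by
    show psi k d (Phi k d (a • t)) = a • psi k d (Phi k d t)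
    rw [Algebra.smul_def, AdjoinRoot.algebraMap_eq, map_mul, map_mul, Phi_of, psi_f1]
    rfl

/-- multiplication by `qT` as an `A`-linear map `T → T`. -/
noncomputable def mulq :
    AdjoinRoot (Pp k d) →ₗ[MvPolynomial (AVar d) k] AdjoinRoot (Pp k d) :=
  LinearMap.mulLeft (MvPolynomial (AVar d) k) (qT k d)

lemma mulq_inj : Function.Injective (mulq k d) := by
  intro x y hxy
  have h2 := congrArg (Phi k d) hxy
  simp only [mulq, LinearMap.mulLeft_apply, map_mul, Phi_qT] at h2
  exact Phi_inj k d (mul_left_cancel₀ (qR_ne k d) h2)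

lemma range_mulq_eq_ker :
    LinearMap.range (mulq k d) = LinearMap.ker (FF k d) := by
  ext t
  simp only [LinearMap.mem_range, LinearMap.mem_ker, mulq, LinearMap.mulLeft_apply]
  constructor
  · rintro ⟨y, rfl⟩
    show psi k d (Phi k d (qT k d * y)) = 0
    rw [map_mul, Phi_qT, map_mul, psi_qR, zero_mul]
  · intro h
    obtain ⟨r, hr⟩ := psi_ker k d (show psi k d (Phi k d t) = 0 from h)
    refine ⟨Xi k d r, ?_⟩
    rw [← Xi_qR, ← map_mul, ← hr, Xi_Phi]

lemma FF_surj : Function.Surjective (FF k d) := fun b =>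
  ⟨Xi k d (sig k d b), by
    show psi k d (Phi k d (Xi k d (sig k d b))) = b
    rw [Phi_Xi, psi_sig]⟩

/-- a basis of `T` over `A` indexed by `Fin (d+1)`. -/
noncomputable def bas :
    Module.Basis (Fin (d+1)) (MvPolynomial (AVar d) k) (AdjoinRoot (Pp k d)) :=
  (AdjoinRoot.powerBasis' (Pp_monic k d)).basis.reindex
    (finCongr (by
      rw [show (AdjoinRoot.powerBasis' (Pp_monic k d)).dim = (Pp k d).natDegree from rfl,
        Pp_natDegree]))

end S10

/-- `B_d` admits a free resolution
`0 → A_{d+1}^{d+1} → A_{d+1}^{d+1} → B_d → 0` as an `A_{d+1}`-module (via `f`):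
there is an injective `A_{d+1}`-linear map `θ` on `A_{d+1}^{d+1}` whose cokernel
is isomorphic to `B_d`. -/
theorem statement10 (k : Type) [Field k] (d : ℕ) :
    ∃ θ : (Fin (d + 1) → MvPolynomial (AVar d) k) →ₗ[MvPolynomial (AVar d) k]
        (Fin (d + 1) → MvPolynomial (AVar d) k),
      Function.Injective θ ∧
      Nonempty (((Fin (d + 1) → MvPolynomial (AVar d) k) ⧸ LinearMap.range θ)
        ≃ₗ[MvPolynomial (AVar d) k] MvPolynomial (BVar d) k) := by
  classical
  let E : (Fin (d + 1) → MvPolynomial (AVar d) k) ≃ₗ[MvPolynomial (AVar d) k]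
      AdjoinRoot (S10.Pp k d) := (S10.bas k d).equivFun.symm
  refine ⟨E.symm.toLinearMap.comp ((S10.mulq k d).comp E.toLinearMap), ?_, ?_⟩
  · intro x y hxy
    simp only [LinearMap.comp_apply, LinearEquiv.coe_coe] at hxy
    exact E.injective (S10.mulq_inj k d (E.symm.injective hxy))
  · have hmap : (LinearMap.range
        (E.symm.toLinearMap.comp ((S10.mulq k d).comp E.toLinearMap))).map E.toLinearMap
        = LinearMap.range (S10.mulq k d) := by
      ext z
      simp only [Submodule.mem_map, LinearMap.mem_range, LinearMap.comp_apply,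
        LinearEquiv.coe_coe]
      constructor
      · rintro ⟨w, ⟨x, rfl⟩, rfl⟩
        exact ⟨E x, by rw [E.apply_symm_apply]⟩
      · rintro ⟨t, rfl⟩
        exact ⟨E.symm (S10.mulq k d t), ⟨E.symm t, by rw [E.apply_symm_apply]⟩,
          by rw [E.apply_symm_apply]⟩
    exact ⟨(Submodule.Quotient.equiv _ _ E hmap).trans
      ((Submodule.quotEquivOfEq _ _ (S10.range_mulq_eq_ker k d)).trans
        ((S10.FF k d).quotKerEquivOfSurjective (S10.FF_surj k d)))⟩
end
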